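/- arXiv:1710.02519 — 5 statements merged into one kernel-verified Lean document; each statement's English description precedes it below -/
import Mathlib

section
/- Let h, A, D : ℝ → ℝ be twice continuously differentiable on a neighborhood of a point L^sec ∈ ℝ with h'(L^sec) = 0, h''(L^sec) ≠ 0 and A(L^sec) > 0, and let σ₀, φ ∈ ℝ satisfy sin(σ₀ − φ) = 0. Then there exist constants ε₀ > 0, c > 0 and C > 0 such that for every ε ∈ (0, ε₀) and every η ∈ [0, c ε], the dissipative toy model dσ/dt = h'(L) + ε A'(L) cos(σ − φ), dL/dt = ε A(L) sin(σ − φ) − η D(L) admits an equilibrium point (σ_d, L_d), i.e. a point at which both right-hand sides vanish, which moreover can be chosen so that |L_d − L^sec| ≤ C ε and |σ_d − σ₀| ≤ C η/ε. -/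
open Real Set Filter Topology

set_option maxHeartbeats 1000000

private lemma abs_cos_sub_cos_le (x y : ℝ) : |Real.cos x - Real.cos y| ≤ |x - y| := by
  rw [Real.cos_sub_cos]
  have h1 := Real.abs_sin_le_one ((x + y) / 2)
  have h2 : |Real.sin ((x - y) / 2)| ≤ |(x - y) / 2| := Real.abs_sin_le_abs
  have h0 : (0:ℝ) ≤ |Real.sin ((x + y) / 2)| := abs_nonneg _
  rw [abs_mul, abs_mul]
  calc |(-2:ℝ)| * |Real.sin ((x + y) / 2)| * |Real.sin ((x - y) / 2)|
      ≤ 2 * 1 * |(x - y) / 2| := by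
        rw [show |(-2:ℝ)| = 2 by norm_num]; gcongr
    _ = |x - y| := by rw [mul_one, abs_div, abs_two]; ring

private lemma c2_structure {f : ℝ → ℝ} {x : ℝ} (hf : ContDiffAt ℝ 2 f x) :
    ∃ s : Set ℝ, IsOpen s ∧ x ∈ s ∧ DifferentiableOn ℝ f s ∧
      DifferentiableOn ℝ (deriv f) s ∧ ContinuousOn (deriv f) s ∧
      ContinuousOn (deriv (deriv f)) s := by
  obtain ⟨u, hu, hcd⟩ := hf.contDiffOn le_rfl (by norm_num)
  obtain ⟨s, hsu, hs, hxs⟩ := mem_nhds_iff.1 hu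
  have hcd2 : ContDiffOn ℝ 2 f s := hcd.mono hsu
  have h1 : ContDiffOn ℝ 1 (deriv f) s := hcd2.deriv_of_isOpen hs (by norm_num)
  have h1' := (contDiffOn_succ_iff_deriv_of_isOpen (n := 0) hs).1 h1
  exact ⟨s, hs, hxs, hcd2.differentiableOn (by norm_num), h1'.1,
    h1.continuousOn, h1'.2.2.continuousOn⟩

/-- Existence part of the paper's Theorem 1: for the dissipative toy model
`dσ/dt = h'(L) + ε A'(L) cos (σ - φ)`, `dL/dt = ε A(L) sin (σ - φ) - η D(L)`,
if `h`, `A`, `D` are `C²` near `Lsec` with `h'(Lsec) = 0`, `h''(Lsec) ≠ 0`,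
`A(Lsec) > 0`, and `sin (σ₀ - φ) = 0`, then there are constants `ε₀, c, C > 0`
such that for all `ε ∈ (0, ε₀)` and `η ∈ [0, c ε]` the system has an
equilibrium `(σ_d, L_d)` with `|L_d - Lsec| ≤ C ε` and `|σ_d - σ₀| ≤ C η/ε`. -/
theorem dissipative_equilibrium_existence
    (h A D : ℝ → ℝ) (Lsec σ₀ φ : ℝ)
    (hh : ContDiffAt ℝ 2 h Lsec) (hA : ContDiffAt ℝ 2 A Lsec)
    (hD : ContDiffAt ℝ 2 D Lsec)
    (hcrit : deriv h Lsec = 0) (hnd : deriv (deriv h) Lsec ≠ 0)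
    (hApos : 0 < A Lsec) (hsin : Real.sin (σ₀ - φ) = 0) :
    ∃ ε₀ > (0:ℝ), ∃ c > (0:ℝ), ∃ C > (0:ℝ),
      ∀ ε ∈ Ioo (0:ℝ) ε₀, ∀ η ∈ Icc (0:ℝ) (c * ε),
        ∃ σd Ld : ℝ,
          deriv h Ld + ε * deriv A Ld * Real.cos (σd - φ) = 0 ∧
          ε * A Ld * Real.sin (σd - φ) - η * D Ld = 0 ∧
          |Ld - Lsec| ≤ C * ε ∧ |σd - σ₀| ≤ C * η / ε := by
  obtain ⟨sh, oh, mh, _, dh1, ch1, ch2⟩ := c2_structure hh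
  obtain ⟨sA, oA, mA, dA0, dA1, cA1, cA2⟩ := c2_structure hA
  obtain ⟨sD, oD, mD, dD0, -, -, -⟩ := c2_structure hD
  set k := deriv (deriv h) Lsec with hkdef
  have kpos : (0:ℝ) < |k| := abs_pos.mpr hnd
  set a := A Lsec with hadef
  set M := |deriv A Lsec| + 1 with hMdef
  set M2 := |deriv (deriv A) Lsec| + 1 with hM2def
  set Dm := |D Lsec| + 1 with hDmdef
  have Mpos : (0:ℝ) < M := by positivity
  have M2pos : (0:ℝ) < M2 := by positivity
  have Dmpos : (0:ℝ) < Dm := by positivity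
  set s : ℝ := if 0 < k then 1 else -1 with hsdef
  have hsk : s * k = |k| := by
    rcases lt_trichotomy 0 k with hk | hk | hk
    · rw [hsdef, if_pos hk, one_mul, abs_of_pos hk]
    · exact absurd hk.symm hnd
    · rw [hsdef, if_neg (by linarith), abs_of_neg hk]; ring
  have hs_abs : |s| = 1 := by rw [hsdef]; split <;> simp
  have hs_ne : s ≠ 0 := by rw [hsdef]; split <;> norm_num
  clear_value k a M M2 Dm s
  -- neighborhood facts
  have ev : ∀ᶠ L in 𝓝 Lsec,
      L ∈ sh ∧ L ∈ sA ∧ L ∈ sD ∧ |k| / 2 ≤ s * deriv (deriv h) L ∧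
      |deriv A L| ≤ M ∧ |deriv (deriv A) L| ≤ M2 ∧ a / 2 ≤ A L ∧ |D L| ≤ Dm := by
    have e1 : ∀ᶠ L in 𝓝 Lsec, L ∈ sh := oh.mem_nhds mh
    have e2 : ∀ᶠ L in 𝓝 Lsec, L ∈ sA := oA.mem_nhds mA
    have e3 : ∀ᶠ L in 𝓝 Lsec, L ∈ sD := oD.mem_nhds mD
    have c4 : ContinuousAt (fun L => s * deriv (deriv h) L) Lsec :=
      continuousAt_const.mul (ch2.continuousAt (oh.mem_nhds mh))
    have e4 : ∀ᶠ L in 𝓝 Lsec, |k| / 2 ≤ s * deriv (deriv h) L := by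
      have hval : |k| / 2 < (fun L => s * deriv (deriv h) L) Lsec := by
        simp only; rw [← hkdef]; linarith
      have := c4.eventually (eventually_ge_nhds hval)
      simpa using this
    have c5 : ContinuousAt (fun L => |deriv A L|) Lsec :=
      (cA1.continuousAt (oA.mem_nhds mA)).abs
    have e5 : ∀ᶠ L in 𝓝 Lsec, |deriv A L| ≤ M := by
      have := c5.eventually (eventually_le_nhds (show |deriv A Lsec| < M by rw [hMdef]; linarith))
      simpa using this
    have c6 : ContinuousAt (fun L => |deriv (deriv A) L|) Lsec :=
      (cA2.continuousAt (oA.mem_nhds mA)).abs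
    have e6 : ∀ᶠ L in 𝓝 Lsec, |deriv (deriv A) L| ≤ M2 := by
      have := c6.eventually (eventually_le_nhds
        (show |deriv (deriv A) Lsec| < M2 by rw [hM2def]; linarith))
      simpa using this
    have c7 : ContinuousAt A Lsec := (dA0.differentiableAt (oA.mem_nhds mA)).continuousAt
    have e7 : ∀ᶠ L in 𝓝 Lsec, a / 2 ≤ A L := by
      have hval : a / 2 < A Lsec := by rw [← hadef]; linarith
      have := c7.eventually (eventually_ge_nhds hval)
      simpa using this
    have c8 : ContinuousAt (fun L => |D L|) Lsec :=
      ((dD0.differentiableAt (oD.mem_nhds mD)).continuousAt).abs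
    have e8 : ∀ᶠ L in 𝓝 Lsec, |D L| ≤ Dm := by
      have := c8.eventually (eventually_le_nhds (show |D Lsec| < Dm by rw [hDmdef]; linarith))
      simpa using this
    filter_upwards [e1, e2, e3, e4, e5, e6, e7, e8] with L h1 h2 h3 h4 h5 h6 h7 h8
    exact ⟨h1, h2, h3, h4, h5, h6, h7, h8⟩
  rw [Metric.eventually_nhds_iff] at ev
  obtain ⟨δ0, δ0pos, hδ0⟩ := ev
  set δ := δ0 / 2 with hδdef
  have δpos : 0 < δ := by positivity
  clear_value δ
  have inB : ∀ L ∈ Icc (Lsec - δ) (Lsec + δ),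
      L ∈ sh ∧ L ∈ sA ∧ L ∈ sD ∧ |k| / 2 ≤ s * deriv (deriv h) L ∧
      |deriv A L| ≤ M ∧ |deriv (deriv A) L| ≤ M2 ∧ a / 2 ≤ A L ∧ |D L| ≤ Dm := by
    intro L hL
    rw [mem_Icc] at hL
    exact hδ0 (show dist L Lsec < δ0 by
      rw [Real.dist_eq, abs_lt]; constructor <;> [linarith [hL.1]; linarith [hL.2]])
  set K1 := 4 * M / |k| with hK1
  set K2 := 4 * Dm / a with hK2
  have K1pos : 0 < K1 := by rw [hK1]; exact div_pos (by linarith) kpos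
  have K2pos : 0 < K2 := by rw [hK2]; exact div_pos (by linarith) hApos
  clear_value K1 K2
  refine ⟨min (δ * |k| / (8 * M)) (|k| / (2 * M2)),
    lt_min (div_pos (mul_pos δpos kpos) (by linarith)) (div_pos kpos (by linarith)),
    min 1 (1 / K2), lt_min one_pos (one_div_pos.mpr K2pos), K1 + K2, by linarith, ?_⟩
  rintro ε ⟨εpos, εlt⟩ η ⟨ηnn, ηle⟩
  have εlt1 : ε < δ * |k| / (8 * M) := lt_of_lt_of_le εlt (min_le_left _ _)
  have εlt2 : ε < |k| / (2 * M2) := lt_of_lt_of_le εlt (min_le_right _ _)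
  have εM2 : ε * M2 < |k| / 2 := by
    rw [lt_div_iff₀ (by linarith : (0:ℝ) < 2 * M2)] at εlt2
    nlinarith
  set r := K1 * ε with hrdef
  have rpos : 0 < r := mul_pos K1pos εpos
  clear_value r
  have hrδ : r ≤ δ / 2 := by
    rw [lt_div_iff₀ (by linarith : (0:ℝ) < 8 * M)] at εlt1
    rw [hrdef, hK1, div_mul_eq_mul_div, div_le_div_iff₀ kpos (by norm_num : (0:ℝ) < 2)]
    nlinarith
  have hrk : |k| / 2 * r = 2 * (M * ε) := by
    rw [hrdef, hK1]; field_simp [kpos.ne']; ring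
  have hsub : Icc (Lsec - r) (Lsec + r) ⊆ Icc (Lsec - δ) (Lsec + δ) :=
    Icc_subset_Icc (by linarith) (by linarith)
  -- continuity of the (rescaled) first equation in L
  have contSF : ∀ σ : ℝ, ContinuousOn
      (fun L => s * (deriv h L + ε * deriv A L * Real.cos (σ - φ)))
      (Icc (Lsec - δ) (Lsec + δ)) := by
    intro σ
    refine continuousOn_const.mul (ContinuousOn.add ?_ ?_)
    · intro L hL
      exact (ch1.continuousAt (oh.mem_nhds (inB L hL).1)).continuousWithinAt
    · refine (continuousOn_const.mul ?_).mul continuousOn_const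
      intro L hL
      exact (cA1.continuousAt (oA.mem_nhds (inB L hL).2.1)).continuousWithinAt
  -- strict monotonicity in L
  have mono : ∀ σ : ℝ, StrictMonoOn
      (fun L => s * (deriv h L + ε * deriv A L * Real.cos (σ - φ)))
      (Icc (Lsec - δ) (Lsec + δ)) := by
    intro σ
    apply strictMonoOn_of_deriv_pos (convex_Icc _ _) (contSF σ)
    intro L hL
    rw [interior_Icc] at hL
    obtain ⟨hLsh, hLsA, -, hk2, -, hA2, -, -⟩ := inB L (Ioo_subset_Icc_self hL)
    have H1 : HasDerivAt (deriv h) (deriv (deriv h) L) L :=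
      (dh1.differentiableAt (oh.mem_nhds hLsh)).hasDerivAt
    have H2 : HasDerivAt (deriv A) (deriv (deriv A) L) L :=
      (dA1.differentiableAt (oA.mem_nhds hLsA)).hasDerivAt
    have HF : HasDerivAt
        (fun L => s * (deriv h L + ε * deriv A L * Real.cos (σ - φ)))
        (s * (deriv (deriv h) L + ε * deriv (deriv A) L * Real.cos (σ - φ))) L := by
      have := (H1.add ((H2.const_mul ε).mul_const (Real.cos (σ - φ)))).const_mul s
      exact this
    rw [HF.deriv]
    have hb : |ε * deriv (deriv A) L * Real.cos (σ - φ)| ≤ ε * M2 := by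
      rw [abs_mul, abs_mul, abs_of_pos εpos]
      have hc := Real.abs_cos_le_one (σ - φ)
      calc ε * |deriv (deriv A) L| * |Real.cos (σ - φ)| ≤ ε * M2 * 1 := by gcongr
        _ = ε * M2 := mul_one _
    have hb2 : -(ε * M2) ≤ s * (ε * deriv (deriv A) L * Real.cos (σ - φ)) :=
      neg_le_of_abs_le (by rw [abs_mul, hs_abs, one_mul]; exact hb)
    rw [mul_add]
    linarith
  -- quantitative growth of h' near Lsec
  have grow := (convex_Icc (Lsec - δ) (Lsec + δ)).mul_sub_le_image_sub_of_le_deriv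
    (f := fun L => s * deriv h L) (C := |k| / 2)
    (continuousOn_const.mul (fun L hL =>
      (ch1.continuousAt (oh.mem_nhds (inB L hL).1)).continuousWithinAt))
    (fun L hL => by
      rw [interior_Icc] at hL
      exact ((dh1.differentiableAt
        (oh.mem_nhds (inB L (Ioo_subset_Icc_self hL)).1)).const_mul s).differentiableWithinAt)
    (fun L hL => by
      rw [interior_Icc] at hL
      rw [deriv_const_mul s (dh1.differentiableAt
        (oh.mem_nhds (inB L (Ioo_subset_Icc_self hL)).1))]
      exact (inB L (Ioo_subset_Icc_self hL)).2.2.2.1)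
  have memc : Lsec ∈ Icc (Lsec - δ) (Lsec + δ) := ⟨by linarith, by linarith⟩
  have memp : Lsec + r ∈ Icc (Lsec - δ) (Lsec + δ) := ⟨by linarith, by linarith⟩
  have memm : Lsec - r ∈ Icc (Lsec - δ) (Lsec + δ) := ⟨by linarith, by linarith⟩
  have g1 : 2 * (M * ε) ≤ s * deriv h (Lsec + r) := by
    have := grow Lsec memc (Lsec + r) memp (by linarith)
    simp only [hcrit, mul_zero, sub_zero] at this
    rw [show Lsec + r - Lsec = r by ring] at this
    linarith [hrk ▸ this]
  have g2 : s * deriv h (Lsec - r) ≤ -(2 * (M * ε)) := by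
    have := grow (Lsec - r) memm Lsec memc (by linarith)
    simp only [hcrit, mul_zero, zero_sub] at this
    rw [show Lsec - (Lsec - r) = r by ring] at this
    linarith [hrk ▸ this]
  -- sign of the first equation at the endpoints, for every σ
  have pert : ∀ (σ : ℝ) (L : ℝ), L ∈ Icc (Lsec - δ) (Lsec + δ) →
      -(M * ε) ≤ s * (ε * deriv A L * Real.cos (σ - φ)) ∧
      s * (ε * deriv A L * Real.cos (σ - φ)) ≤ M * ε := by
    intro σ L hL
    have hA1 := (inB L hL).2.2.2.2.1
    have hb : |s * (ε * deriv A L * Real.cos (σ - φ))| ≤ M * ε := by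
      rw [abs_mul, hs_abs, one_mul, abs_mul, abs_mul, abs_of_pos εpos]
      have hc := Real.abs_cos_le_one (σ - φ)
      calc ε * |deriv A L| * |Real.cos (σ - φ)| ≤ ε * M * 1 := by gcongr
        _ = M * ε := by ring
    exact abs_le.mp hb
  have hroot : ∀ σ : ℝ, ∃ L, L ∈ Icc (Lsec - r) (Lsec + r) ∧
      deriv h L + ε * deriv A L * Real.cos (σ - φ) = 0 := by
    intro σ
    have hcont : ContinuousOn (fun L => s * (deriv h L + ε * deriv A L * Real.cos (σ - φ)))
        (Icc (Lsec - r) (Lsec + r)) := (contSF σ).mono hsub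
    have hup : 0 ≤ s * (deriv h (Lsec + r) + ε * deriv A (Lsec + r) * Real.cos (σ - φ)) := by
      have := (pert σ (Lsec + r) memp).1
      rw [mul_add]; nlinarith
    have hdn : s * (deriv h (Lsec - r) + ε * deriv A (Lsec - r) * Real.cos (σ - φ)) ≤ 0 := by
      have := (pert σ (Lsec - r) memm).2
      rw [mul_add]; nlinarith
    obtain ⟨L, hL, hL0⟩ := intermediate_value_Icc (by linarith : Lsec - r ≤ Lsec + r) hcont
      (show (0:ℝ) ∈ Icc _ _ from ⟨hdn, hup⟩)
    exact ⟨L, hL, by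
      rcases mul_eq_zero.mp hL0 with hc | hc
      · exact absurd hc hs_ne
      · exact hc⟩
  choose R hRmem hRroot using hroot
  have hRB : ∀ σ, R σ ∈ Icc (Lsec - δ) (Lsec + δ) := fun σ => hsub (hRmem σ)
  have Rcont : Continuous R := by
    rw [continuous_iff_continuousAt]
    intro σ
    rw [Metric.continuousAt_iff]
    intro e epos
    have e'pos : 0 < min (e / 2) (δ / 2) := lt_min (by linarith) (by linarith)
    set e' := min (e / 2) (δ / 2) with he'
    have he'1 : e' ≤ e / 2 := min_le_left _ _
    have he'2 : e' ≤ δ / 2 := min_le_right _ _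
    have hmem1 : R σ - e' ∈ Icc (Lsec - δ) (Lsec + δ) := by
      have := hRmem σ; rw [mem_Icc] at this
      exact ⟨by linarith [this.1, hrδ], by linarith [this.2, hrδ]⟩
    have hmem2 : R σ + e' ∈ Icc (Lsec - δ) (Lsec + δ) := by
      have := hRmem σ; rw [mem_Icc] at this
      exact ⟨by linarith [this.1, hrδ], by linarith [this.2, hrδ]⟩
    have hzero : s * (deriv h (R σ) + ε * deriv A (R σ) * Real.cos (σ - φ)) = 0 := by
      rw [hRroot σ, mul_zero]
    have hneg : s * (deriv h (R σ - e') + ε * deriv A (R σ - e') * Real.cos (σ - φ)) < 0 := by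
      have := mono σ hmem1 (hRB σ) (by linarith)
      simpa [hzero] using this
    have hpos : 0 < s * (deriv h (R σ + e') + ε * deriv A (R σ + e') * Real.cos (σ - φ)) := by
      have := mono σ (hRB σ) hmem2 (by linarith)
      simpa [hzero] using this
    set g := min (-(s * (deriv h (R σ - e') + ε * deriv A (R σ - e') * Real.cos (σ - φ))))
      (s * (deriv h (R σ + e') + ε * deriv A (R σ + e') * Real.cos (σ - φ))) with hg
    have gpos : 0 < g := lt_min (by linarith) hpos
    have hg1 : g ≤ -(s * (deriv h (R σ - e') + ε * deriv A (R σ - e') * Real.cos (σ - φ))) :=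
      min_le_left _ _
    have hg2 : g ≤ s * (deriv h (R σ + e') + ε * deriv A (R σ + e') * Real.cos (σ - φ)) :=
      min_le_right _ _
    clear_value g
    have dpos : 0 < g / (2 * (ε * M)) := by positivity
    refine ⟨g / (2 * (ε * M)), dpos, fun {σ'} hσ' => ?_⟩
    rw [Real.dist_eq] at hσ'
    -- uniform bound on the σ-dependence
    have key : ∀ L ∈ Icc (Lsec - δ) (Lsec + δ),
        |s * (deriv h L + ε * deriv A L * Real.cos (σ' - φ)) -
          s * (deriv h L + ε * deriv A L * Real.cos (σ - φ))| < g := by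
      intro L hL
      have hA1 := (inB L hL).2.2.2.2.1
      have heq : s * (deriv h L + ε * deriv A L * Real.cos (σ' - φ)) -
          s * (deriv h L + ε * deriv A L * Real.cos (σ - φ)) =
          s * (ε * deriv A L) * (Real.cos (σ' - φ) - Real.cos (σ - φ)) := by ring
      rw [heq, abs_mul, abs_mul, hs_abs, one_mul, abs_mul, abs_of_pos εpos]
      have hc : |Real.cos (σ' - φ) - Real.cos (σ - φ)| ≤ |σ' - σ| := by
        have := _root_.abs_cos_sub_cos_le (σ' - φ) (σ - φ)
        rwa [show σ' - φ - (σ - φ) = σ' - σ by ring] at this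
      calc ε * |deriv A L| * |Real.cos (σ' - φ) - Real.cos (σ - φ)|
          ≤ ε * M * |σ' - σ| := by gcongr
        _ < ε * M * (g / (2 * (ε * M))) := by
            have hεM : 0 < ε * M := mul_pos εpos Mpos
            exact (mul_lt_mul_iff_right₀ hεM).mpr hσ'
        _ = g / 2 := by field_simp
        _ < g := by linarith
    have q1 : s * (deriv h (R σ - e') + ε * deriv A (R σ - e') * Real.cos (σ' - φ)) < 0 := by
      have hk := key _ hmem1
      have := (abs_lt.mp hk).2
      linarith
    have q2 : 0 < s * (deriv h (R σ + e') + ε * deriv A (R σ + e') * Real.cos (σ' - φ)) := by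
      have hk := key _ hmem2
      have := (abs_lt.mp hk).1
      linarith
    have hzero' : s * (deriv h (R σ') + ε * deriv A (R σ') * Real.cos (σ' - φ)) = 0 := by
      rw [hRroot σ', mul_zero]
    have hlow : R σ - e' < R σ' := by
      by_contra hcon
      push_neg at hcon
      have := (mono σ').monotoneOn (hRB σ') hmem1 hcon
      rw [hzero'] at this
      linarith
    have hhigh : R σ' < R σ + e' := by
      by_contra hcon
      push_neg at hcon
      have := (mono σ').monotoneOn hmem2 (hRB σ') hcon
      rw [hzero'] at this
      linarith
    rw [Real.dist_eq, abs_lt]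
    constructor <;> [linarith; linarith]
  have hr2 : r ≤ (K1 + K2) * ε := by
    rw [hrdef]; linarith only [mul_pos K2pos εpos]
  have boundL : ∀ σ, |R σ - Lsec| ≤ (K1 + K2) * ε := by
    intro σ
    have := hRmem σ; rw [mem_Icc] at this
    rw [abs_le]
    exact ⟨by linarith [this.1], by linarith [this.2]⟩
  rcases eq_or_lt_of_le ηnn with hη0 | ηpos
  · -- no drag: the conservative equilibrium works
    refine ⟨σ₀, R σ₀, hRroot σ₀, ?_, boundL σ₀, ?_⟩
    · rw [hsin, ← hη0]; ring
    · rw [← hη0]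
      simp
  -- positive drag
  set Δ := K2 * η / ε with hΔ
  have Δpos : 0 < Δ := by rw [hΔ]; positivity
  clear_value Δ
  have hK2η : K2 * η ≤ ε := by
    have h1 : η ≤ 1 / K2 * ε :=
      le_trans ηle (mul_le_mul_of_nonneg_right (min_le_right 1 (1 / K2)) εpos.le)
    calc K2 * η ≤ K2 * (1 / K2 * ε) := mul_le_mul_of_nonneg_left h1 K2pos.le
      _ = ε := by field_simp
  have Δle1 : Δ ≤ 1 := by
    rw [hΔ, div_le_one εpos]; linarith
  have Δlepi : Δ ≤ π / 2 := le_trans Δle1 (by linarith only [Real.pi_gt_three])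
  have sinlow : 2 / π * Δ ≤ Real.sin Δ := Real.mul_le_sin Δpos.le Δlepi
  have sinpos : 0 ≤ Real.sin Δ :=
    le_trans (mul_nonneg (by positivity) Δpos.le) sinlow
  have he : Real.cos (σ₀ - φ) = 1 ∨ Real.cos (σ₀ - φ) = -1 := by
    have h1 := Real.sin_sq_add_cos_sq (σ₀ - φ)
    rw [hsin] at h1
    have h2 : (Real.cos (σ₀ - φ) - 1) * (Real.cos (σ₀ - φ) + 1) = 0 := by
      linear_combination h1
    rcases mul_eq_zero.mp h2 with h3 | h3
    · exact Or.inl (by linarith)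
    · exact Or.inr (by linarith)
  have hτabs : -Δ ≤ Real.cos (σ₀ - φ) * Δ ∧ Real.cos (σ₀ - φ) * Δ ≤ Δ := by
    rcases he with he | he <;> rw [he] <;> constructor <;> linarith
  have hu : Real.sin ((σ₀ + Real.cos (σ₀ - φ) * Δ) - φ) = Real.sin Δ := by
    rw [show (σ₀ + Real.cos (σ₀ - φ) * Δ) - φ = (σ₀ - φ) + Real.cos (σ₀ - φ) * Δ by ring,
      Real.sin_add, hsin, zero_mul, zero_add]
    rcases he with he | he <;> rw [he] <;> simp
  have hv : Real.sin ((σ₀ - Real.cos (σ₀ - φ) * Δ) - φ) = -Real.sin Δ := by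
    rw [show (σ₀ - Real.cos (σ₀ - φ) * Δ) - φ = (σ₀ - φ) + -(Real.cos (σ₀ - φ) * Δ) by ring,
      Real.sin_add, hsin, zero_mul, zero_add, Real.sin_neg]
    rcases he with he | he <;> rw [he] <;> simp
  -- the bounds on the dissipative function at the two test angles
  have hDval : ∀ σ, -(η * Dm) ≤ η * D (R σ) ∧ η * D (R σ) ≤ η * Dm := by
    intro σ
    have hDbd := (inB _ (hRB σ)).2.2.2.2.2.2.2
    have := abs_le.mp hDbd
    exact ⟨by linarith only [mul_le_mul_of_nonneg_left this.1 ηnn],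
      by linarith only [mul_le_mul_of_nonneg_left this.2 ηnn]⟩
  have hmain : 4 * Dm * η / π ≤ ε * (a / 2) * Real.sin Δ := by
    have h4 : ε * (a / 2) * (2 / π * Δ) ≤ ε * (a / 2) * Real.sin Δ :=
      mul_le_mul_of_nonneg_left sinlow (by positivity)
    have h5 : ε * (a / 2) * (2 / π * Δ) = a * K2 * η / π := by
      rw [hΔ]; field_simp
    have h6 : a * K2 * η / π = 4 * Dm * η / π := by
      rw [hK2]; field_simp
    rw [← h6, ← h5]; exact h4
  have hπη : η * Dm ≤ 4 * Dm * η / π := by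
    rw [le_div_iff₀ Real.pi_pos]
    linarith only [mul_nonneg (mul_nonneg
      (sub_nonneg.mpr Real.pi_le_four) Dmpos.le) ηnn]
  have hAmul : ∀ σ, ε * (a / 2) * Real.sin Δ ≤ ε * A (R σ) * Real.sin Δ := by
    intro σ
    have hAlow := (inB _ (hRB σ)).2.2.2.2.2.2.1
    exact mul_le_mul_of_nonneg_right
      (mul_le_mul_of_nonneg_left hAlow εpos.le) sinpos
  have hGu : (0:ℝ) ≤ ε * A (R (σ₀ + Real.cos (σ₀ - φ) * Δ)) *
      Real.sin ((σ₀ + Real.cos (σ₀ - φ) * Δ) - φ) -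
      η * D (R (σ₀ + Real.cos (σ₀ - φ) * Δ)) := by
    rw [hu]
    have := (hDval (σ₀ + Real.cos (σ₀ - φ) * Δ)).2
    linarith [hAmul (σ₀ + Real.cos (σ₀ - φ) * Δ), hmain, hπη]
  have hGv : ε * A (R (σ₀ - Real.cos (σ₀ - φ) * Δ)) *
      Real.sin ((σ₀ - Real.cos (σ₀ - φ) * Δ) - φ) -
      η * D (R (σ₀ - Real.cos (σ₀ - φ) * Δ)) ≤ 0 := by
    rw [hv]
    have h1 := (hDval (σ₀ - Real.cos (σ₀ - φ) * Δ)).1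
    have h2 := hAmul (σ₀ - Real.cos (σ₀ - φ) * Δ)
    have h3 : ε * A (R (σ₀ - Real.cos (σ₀ - φ) * Δ)) * -Real.sin Δ =
        -(ε * A (R (σ₀ - Real.cos (σ₀ - φ) * Δ)) * Real.sin Δ) := by ring
    rw [h3]
    linarith [hmain, hπη]
  -- intermediate value theorem in σ
  have Gcont : Continuous (fun σ => ε * A (R σ) * Real.sin (σ - φ) - η * D (R σ)) := by
    rw [continuous_iff_continuousAt]
    intro σ
    have c1 : ContinuousAt (fun σ => A (R σ)) σ :=
      ((dA0.differentiableAt (oA.mem_nhds (inB _ (hRB σ)).2.1)).continuousAt).comp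
        Rcont.continuousAt
    have c2 : ContinuousAt (fun σ => D (R σ)) σ :=
      ((dD0.differentiableAt (oD.mem_nhds (inB _ (hRB σ)).2.2.1)).continuousAt).comp
        Rcont.continuousAt
    have c3 : ContinuousAt (fun σ : ℝ => Real.sin (σ - φ)) σ :=
      (Real.continuous_sin.comp (continuous_id.sub continuous_const)).continuousAt
    exact ((continuousAt_const.mul c1).mul c3).sub (continuousAt_const.mul c2)
  obtain ⟨σd, hσdmem, hσdval⟩ :=
    intermediate_value_uIcc
      (a := σ₀ - Real.cos (σ₀ - φ) * Δ) (b := σ₀ + Real.cos (σ₀ - φ) * Δ)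
      (Gcont.continuousOn)
      (Set.mem_uIcc.mpr (Or.inl ⟨hGv, hGu⟩))
  refine ⟨σd, R σd, hRroot σd, hσdval, boundL σd, ?_⟩
  have hσdΔ : |σd - σ₀| ≤ Δ := by
    rw [Set.mem_uIcc] at hσdmem
    rw [abs_le]
    rcases hσdmem with ⟨h1, h2⟩ | ⟨h1, h2⟩ <;>
      exact ⟨by linarith [hτabs.1, hτabs.2], by linarith [hτabs.1, hτabs.2]⟩
  have hΔC : Δ ≤ (K1 + K2) * η / ε := by
    rw [hΔ]
    gcongr <;> linarith
  linarith
end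

section
/- Let h, A, D : ℝ → ℝ be twice continuously differentiable on a neighborhood of L^sec ∈ ℝ with h'(L^sec) = 0, h''(L^sec) ≠ 0 and A(L^sec) > 0, and let σ₀, φ ∈ ℝ satisfy sin(σ₀ − φ) = 0. Then there exists ε₀ > 0 such that for each ε ∈ (0, ε₀) the following holds: letting L₀ = L₀(ε) be the unique solution near L^sec of h'(L) + ε A'(L) cos(σ₀ − φ) = 0, there exist c > 0 and a continuously differentiable curve η ↦ (σ_d(η), L_d(η)) defined for η ∈ [0, c), consisting of equilibrium points of the dissipative toy model dσ/dt = h'(L) + ε A'(L) cos(σ − φ), dL/dt = ε A(L) sin(σ − φ) − η D(L), such that (σ_d(0), L_d(0)) = (σ₀, L₀), the derivative of L_d at η = 0 vanishes, and the derivative of σ_d at η = 0 equals D(L₀) / (ε A(L₀) cos(σ₀ − φ)). In particular, at first order in η the equilibrium is (σ₀ + η D(L₀)/(ε A(L₀) cos(σ₀ − φ)), L₀): the drag shifts the equilibrium along the σ axis while leaving the action L unchanged to first order. -/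
open Real Set Filter Topology

/-- Quantitative existence and uniqueness of a zero for a function with a
derivative bounded below by `m > 0` on an interval. -/
lemma aux_zero_of_deriv_lb (f f' : ℝ → ℝ) (x₀ δ m : ℝ) (hδ : 0 < δ) (hm : 0 < m)
    (hder : ∀ x ∈ Icc (x₀ - δ) (x₀ + δ), HasDerivAt f (f' x) x)
    (hlb : ∀ x ∈ Icc (x₀ - δ) (x₀ + δ), m ≤ f' x)
    (hsmall : |f x₀| < m * δ) :
    ∃ z, |z - x₀| < δ ∧ f z = 0 ∧
      ∀ w, |w - x₀| < δ → f w = 0 → w = z := by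
  have hIcc : x₀ ∈ Icc (x₀ - δ) (x₀ + δ) := by
    constructor <;> linarith
  have hcont : ContinuousOn f (Icc (x₀ - δ) (x₀ + δ)) := fun x hx =>
    (hder x hx).continuousAt.continuousWithinAt
  -- growth estimate via monotonicity of g := f - m * id
  have hkey : ∀ x ∈ Icc (x₀ - δ) (x₀ + δ), ∀ y ∈ Icc (x₀ - δ) (x₀ + δ),
      x ≤ y → f x + m * (y - x) ≤ f y := by
    have hmono : MonotoneOn (fun x => f x - m * x) (Icc (x₀ - δ) (x₀ + δ)) := by
      apply monotoneOn_of_hasDerivWithinAt_nonneg (f' := fun x => f' x - m)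
        (convex_Icc _ _) (hcont.sub (continuousOn_const.mul continuousOn_id))
      · intro x hx
        have hx' : x ∈ Icc (x₀ - δ) (x₀ + δ) := interior_subset hx
        exact (((hder x hx').sub ((hasDerivAt_id x).const_mul m)).hasDerivWithinAt).congr_deriv
          (by ring)
      · intro x hx
        have hx' : x ∈ Icc (x₀ - δ) (x₀ + δ) := interior_subset hx
        have := hlb x hx'
        linarith
    intro x hx y hy hxy
    have := hmono hx hy hxy
    simp only at this
    nlinarith
  have habs := abs_lt.1 hsmall
  have hpos : 0 < f (x₀ + δ) := by
    have := hkey x₀ hIcc (x₀ + δ) (by constructor <;> linarith) (by linarith)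
    nlinarith
  have hneg : f (x₀ - δ) < 0 := by
    have := hkey (x₀ - δ) (by constructor <;> linarith) x₀ hIcc (by linarith)
    nlinarith
  have hivt := intermediate_value_Ioo (by linarith : x₀ - δ ≤ x₀ + δ) hcont
  have h0 : (0:ℝ) ∈ Ioo (f (x₀ - δ)) (f (x₀ + δ)) := ⟨hneg, hpos⟩
  obtain ⟨z, hz, hfz⟩ := hivt h0
  refine ⟨z, ?_, hfz, ?_⟩
  · rw [abs_sub_lt_iff]; constructor <;> [linarith [hz.2]; linarith [hz.1]]
  · intro w hw hfw
    have hwI : w ∈ Icc (x₀ - δ) (x₀ + δ) := by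
      have := abs_sub_lt_iff.1 hw
      constructor <;> linarith [this.1, this.2]
    have hzI : z ∈ Icc (x₀ - δ) (x₀ + δ) := ⟨hz.1.le, hz.2.le⟩
    rcases lt_trichotomy w z with hlt | heq | hgt
    · have := hkey w hwI z hzI hlt.le
      nlinarith
    · exact heq
    · have := hkey z hzI w hwI hgt.le
      nlinarith


/-- The map defining equilibria of the dissipative toy model, as a map `ℝ³ → ℝ³`
whose first component records the drag parameter `η`. -/
noncomputable def toyF (h A D : ℝ → ℝ) (ε φ : ℝ) (w : ℝ × ℝ × ℝ) : ℝ × ℝ × ℝ :=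
  (w.1, deriv h w.2.2 + ε * deriv A w.2.2 * Real.cos (w.2.1 - φ),
    ε * A w.2.2 * Real.sin (w.2.1 - φ) - w.1 * D w.2.2)

/-- The linearization of `toyF` at the equilibrium, as a continuous linear equivalence. -/
noncomputable def toyJ (q p d : ℝ) (hq : q ≠ 0) (hp : p ≠ 0) :
    (ℝ × ℝ × ℝ) ≃L[ℝ] (ℝ × ℝ × ℝ) :=
  LinearEquiv.toContinuousLinearEquiv
  { toFun := fun w => (w.1, q * w.2.2, p * w.2.1 - d * w.1)
    invFun := fun u => (u.1, (u.2.2 + d * u.1) / p, u.2.1 / q)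
    map_add' := by intro x y; dsimp; refine Prod.ext ?_ (Prod.ext ?_ ?_) <;> dsimp <;> ring
    map_smul' := by intro t x; dsimp; refine Prod.ext ?_ (Prod.ext ?_ ?_) <;> dsimp <;> ring
    left_inv := by
      intro x; refine Prod.ext ?_ (Prod.ext ?_ ?_) <;> dsimp <;> field_simp <;> ring
    right_inv := by
      intro u; refine Prod.ext ?_ (Prod.ext ?_ ?_) <;> dsimp <;> field_simp <;> ring }

lemma toyJ_apply (q p d : ℝ) (hq : q ≠ 0) (hp : p ≠ 0) (w : ℝ × ℝ × ℝ) :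
    (toyJ q p d hq hp : (ℝ × ℝ × ℝ) →L[ℝ] (ℝ × ℝ × ℝ)) w
      = (w.1, q * w.2.2, p * w.2.1 - d * w.1) := rfl

lemma toyJ_symm_apply (q p d : ℝ) (hq : q ≠ 0) (hp : p ≠ 0) (u : ℝ × ℝ × ℝ) :
    (toyJ q p d hq hp).symm u = (u.1, (u.2.2 + d * u.1) / p, u.2.1 / q) := rfl

lemma toyF_hasFDerivAt {h A D : ℝ → ℝ} {ε φ σ₀ L₀ q p d : ℝ}
    (hdh : HasDerivAt (deriv h) (deriv (deriv h) L₀) L₀)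
    (hdA : HasDerivAt (deriv A) (deriv (deriv A) L₀) L₀)
    (hA' : HasDerivAt A (deriv A L₀) L₀)
    (hD' : HasDerivAt D (deriv D L₀) L₀)
    (hsin : Real.sin (σ₀ - φ) = 0)
    (hqv : q = deriv (deriv h) L₀ + ε * deriv (deriv A) L₀ * Real.cos (σ₀ - φ))
    (hpv : p = ε * A L₀ * Real.cos (σ₀ - φ)) (hdv : d = D L₀)
    (hq0 : q ≠ 0) (hp0 : p ≠ 0) :
    HasFDerivAt (toyF h A D ε φ)
      ((toyJ q p d hq0 hp0 : (ℝ × ℝ × ℝ) ≃L[ℝ] (ℝ × ℝ × ℝ)) : (ℝ × ℝ × ℝ) →L[ℝ] (ℝ × ℝ × ℝ))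
      ((0:ℝ), σ₀, L₀) := by
  set a : ℝ × ℝ × ℝ := ((0:ℝ), σ₀, L₀) with ha
  set π₁ : ℝ × ℝ × ℝ →L[ℝ] ℝ := ContinuousLinearMap.fst ℝ ℝ (ℝ × ℝ) with hπ₁
  set π₂ : ℝ × ℝ × ℝ →L[ℝ] ℝ :=
    (ContinuousLinearMap.fst ℝ ℝ ℝ).comp (ContinuousLinearMap.snd ℝ ℝ (ℝ × ℝ)) with hπ₂
  set π₃ : ℝ × ℝ × ℝ →L[ℝ] ℝ :=
    (ContinuousLinearMap.snd ℝ ℝ ℝ).comp (ContinuousLinearMap.snd ℝ ℝ (ℝ × ℝ)) with hπ₃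
  have h1 : HasFDerivAt (fun w : ℝ × ℝ × ℝ => w.1) π₁ a := hasFDerivAt_fst
  have h2 : HasFDerivAt (fun w : ℝ × ℝ × ℝ => w.2.1) π₂ a :=
    hasFDerivAt_fst.comp a hasFDerivAt_snd
  have h3 : HasFDerivAt (fun w : ℝ × ℝ × ℝ => w.2.2) π₃ a :=
    hasFDerivAt_snd.comp a hasFDerivAt_snd
  -- second component
  have Hdh : HasFDerivAt (fun w : ℝ × ℝ × ℝ => deriv h w.2.2)
      ((deriv (deriv h) L₀) • π₃) a := by have := hdh.comp_hasFDerivAt a h3; exact this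
  have HdA : HasFDerivAt (fun w : ℝ × ℝ × ℝ => deriv A w.2.2)
      ((deriv (deriv A) L₀) • π₃) a := by have := hdA.comp_hasFDerivAt a h3; exact this
  have hcos1 : HasDerivAt (fun y : ℝ => Real.cos (y - φ)) (-Real.sin (σ₀ - φ) * 1) σ₀ :=
    by have := (Real.hasDerivAt_cos (σ₀ - φ)).comp σ₀ ((hasDerivAt_id σ₀).sub_const φ); exact this
  have Hcos : HasFDerivAt (fun w : ℝ × ℝ × ℝ => Real.cos (w.2.1 - φ))
      ((-Real.sin (σ₀ - φ) * 1) • π₂) a := by have := hcos1.comp_hasFDerivAt a h2; exact this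
  have hsin1 : HasDerivAt (fun y : ℝ => Real.sin (y - φ)) (Real.cos (σ₀ - φ) * 1) σ₀ :=
    by have := (Real.hasDerivAt_sin (σ₀ - φ)).comp σ₀ ((hasDerivAt_id σ₀).sub_const φ); exact this
  have Hsin : HasFDerivAt (fun w : ℝ × ℝ × ℝ => Real.sin (w.2.1 - φ))
      ((Real.cos (σ₀ - φ) * 1) • π₂) a := by have := hsin1.comp_hasFDerivAt a h2; exact this
  have HF2 : HasFDerivAt
      (fun w : ℝ × ℝ × ℝ => deriv h w.2.2 + ε * deriv A w.2.2 * Real.cos (w.2.1 - φ))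
      ((deriv (deriv h) L₀) • π₃ +
        ((ε * deriv A L₀) • ((-Real.sin (σ₀ - φ) * 1) • π₂) +
          Real.cos (σ₀ - φ) • (ε • ((deriv (deriv A) L₀) • π₃)))) a :=
    Hdh.add ((HdA.const_mul ε).mul Hcos)
  -- third component
  have HA : HasFDerivAt (fun w : ℝ × ℝ × ℝ => A w.2.2) ((deriv A L₀) • π₃) a :=
    hA'.comp_hasFDerivAt a h3
  have HD : HasFDerivAt (fun w : ℝ × ℝ × ℝ => D w.2.2) ((deriv D L₀) • π₃) a :=
    hD'.comp_hasFDerivAt a h3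
  have HF3 : HasFDerivAt
      (fun w : ℝ × ℝ × ℝ => ε * A w.2.2 * Real.sin (w.2.1 - φ) - w.1 * D w.2.2)
      (((ε * A L₀) • ((Real.cos (σ₀ - φ) * 1) • π₂) +
          Real.sin (σ₀ - φ) • (ε • ((deriv A L₀) • π₃))) -
        ((0:ℝ) • ((deriv D L₀) • π₃) + D L₀ • π₁)) a :=
    ((HA.const_mul ε).mul Hsin).sub (h1.mul HD)
  have Htot := (h1.prodMk (HF2.prodMk HF3))
  have hEq : (π₁.prod (((deriv (deriv h) L₀) • π₃ +
        ((ε * deriv A L₀) • ((-Real.sin (σ₀ - φ) * 1) • π₂) +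
          Real.cos (σ₀ - φ) • (ε • ((deriv (deriv A) L₀) • π₃)))).prod
        (((ε * A L₀) • ((Real.cos (σ₀ - φ) * 1) • π₂) +
          Real.sin (σ₀ - φ) • (ε • ((deriv A L₀) • π₃))) -
        ((0:ℝ) • ((deriv D L₀) • π₃) + D L₀ • π₁))))
      = ((toyJ q p d hq0 hp0 : (ℝ × ℝ × ℝ) ≃L[ℝ] (ℝ × ℝ × ℝ)) : (ℝ × ℝ × ℝ) →L[ℝ] (ℝ × ℝ × ℝ)) := by
    apply ContinuousLinearMap.ext
    intro w
    rw [toyJ_apply]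
    simp only [ContinuousLinearMap.prod_apply, ContinuousLinearMap.add_apply,
      ContinuousLinearMap.coe_smul', Pi.smul_apply, ContinuousLinearMap.sub_apply,
      hπ₁, hπ₂, hπ₃, ContinuousLinearMap.coe_comp', Function.comp_apply,
      ContinuousLinearMap.coe_fst', ContinuousLinearMap.coe_snd', smul_eq_mul,
      hsin, hqv, hpv, hdv]
    refine Prod.ext rfl (Prod.ext ?_ ?_) <;> dsimp <;> ring
  rw [← hEq]
  exact Htot

lemma toyF_contDiffAt {h A D : ℝ → ℝ} {ε φ σ₀ L₀ : ℝ}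
    (hdh : ContDiffAt ℝ 1 (deriv h) L₀) (hdA : ContDiffAt ℝ 1 (deriv A) L₀)
    (hA : ContDiffAt ℝ 1 A L₀) (hD : ContDiffAt ℝ 1 D L₀) :
    ContDiffAt ℝ 1 (toyF h A D ε φ) ((0:ℝ), σ₀, L₀) := by
  set a : ℝ × ℝ × ℝ := ((0:ℝ), σ₀, L₀) with ha
  have h1 : ContDiffAt ℝ 1 (fun w : ℝ × ℝ × ℝ => w.1) a := contDiffAt_fst
  have h2 : ContDiffAt ℝ 1 (fun w : ℝ × ℝ × ℝ => w.2.1) a :=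
    (contDiff_fst.comp contDiff_snd).contDiffAt
  have h3 : ContDiffAt ℝ 1 (fun w : ℝ × ℝ × ℝ => w.2.2) a :=
    (contDiff_snd.comp contDiff_snd).contDiffAt
  have hc : ContDiffAt ℝ 1 (fun w : ℝ × ℝ × ℝ => Real.cos (w.2.1 - φ)) a :=
    (Real.contDiff_cos.contDiffAt).comp a (h2.sub contDiffAt_const)
  have hs : ContDiffAt ℝ 1 (fun w : ℝ × ℝ × ℝ => Real.sin (w.2.1 - φ)) a :=
    (Real.contDiff_sin.contDiffAt).comp a (h2.sub contDiffAt_const)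
  exact h1.prodMk
    (((hdh.comp a h3).add ((contDiffAt_const.mul (hdA.comp a h3)).mul hc)).prodMk
      (((contDiffAt_const.mul (hA.comp a h3)).mul hs).sub (h1.mul (hD.comp a h3))))

lemma toy_curve {h A D : ℝ → ℝ} {ε φ σ₀ L₀ : ℝ}
    (hdh : ContDiffAt ℝ 1 (deriv h) L₀) (hdA : ContDiffAt ℝ 1 (deriv A) L₀)
    (hA : ContDiffAt ℝ 1 A L₀) (hD : ContDiffAt ℝ 1 D L₀)
    (hsin : Real.sin (σ₀ - φ) = 0)
    (heq : deriv h L₀ + ε * deriv A L₀ * Real.cos (σ₀ - φ) = 0)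
    (hq0 : deriv (deriv h) L₀ + ε * deriv (deriv A) L₀ * Real.cos (σ₀ - φ) ≠ 0)
    (hp0 : ε * A L₀ * Real.cos (σ₀ - φ) ≠ 0) :
    ∃ c > (0:ℝ), ∃ σd Ld : ℝ → ℝ,
      ContDiffOn ℝ 1 σd (Ico 0 c) ∧ ContDiffOn ℝ 1 Ld (Ico 0 c) ∧
      (∀ η ∈ Ico (0:ℝ) c,
        deriv h (Ld η) + ε * deriv A (Ld η) * Real.cos (σd η - φ) = 0 ∧
        ε * A (Ld η) * Real.sin (σd η - φ) - η * D (Ld η) = 0) ∧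
      σd 0 = σ₀ ∧ Ld 0 = L₀ ∧
      derivWithin Ld (Ico 0 c) 0 = 0 ∧
      derivWithin σd (Ico 0 c) 0 = D L₀ / (ε * A L₀ * Real.cos (σ₀ - φ)) := by
  have hFd : HasFDerivAt (toyF h A D ε φ)
      ((toyJ _ _ _ hq0 hp0 : (ℝ × ℝ × ℝ) ≃L[ℝ] (ℝ × ℝ × ℝ)) : (ℝ × ℝ × ℝ) →L[ℝ] (ℝ × ℝ × ℝ))
      ((0:ℝ), σ₀, L₀) :=
    toyF_hasFDerivAt ((hdh.differentiableAt one_ne_zero).hasDerivAt)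
      ((hdA.differentiableAt one_ne_zero).hasDerivAt) ((hA.differentiableAt one_ne_zero).hasDerivAt)
      ((hD.differentiableAt one_ne_zero).hasDerivAt) hsin rfl rfl rfl hq0 hp0
  have hFc : ContDiffAt ℝ 1 (toyF h A D ε φ) ((0:ℝ), σ₀, L₀) :=
    toyF_contDiffAt hdh hdA hA hD
  have hn : (1 : WithTop ℕ∞) ≠ 0 := one_ne_zero
  set J : (ℝ × ℝ × ℝ) ≃L[ℝ] (ℝ × ℝ × ℝ) :=
    toyJ (deriv (deriv h) L₀ + ε * deriv (deriv A) L₀ * Real.cos (σ₀ - φ))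
      (ε * A L₀ * Real.cos (σ₀ - φ)) (D L₀) hq0 hp0 with hJdef
  set G : ℝ × ℝ × ℝ → ℝ × ℝ × ℝ := hFc.localInverse hFd hn with hG
  have hFa : toyF h A D ε φ ((0:ℝ), σ₀, L₀) = ((0:ℝ), (0:ℝ), (0:ℝ)) := by
    simp [toyF, hsin, heq]
  have hGa : G ((0:ℝ), (0:ℝ), (0:ℝ)) = ((0:ℝ), σ₀, L₀) := by
    rw [← hFa]; exact hFc.localInverse_apply_image hFd hn
  have hGc : ContDiffAt ℝ 1 G ((0:ℝ), (0:ℝ), (0:ℝ)) := by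
    rw [← hFa]; exact hFc.to_localInverse hFd hn
  have hGs : HasStrictFDerivAt G
      ((J.symm : (ℝ × ℝ × ℝ) ≃L[ℝ] (ℝ × ℝ × ℝ)) :
        (ℝ × ℝ × ℝ) →L[ℝ] (ℝ × ℝ × ℝ)) ((0:ℝ), (0:ℝ), (0:ℝ)) := by
    rw [← hFa]; exact (hFc.hasStrictFDerivAt' hFd hn).to_localInverse
  have hGr : ∀ᶠ y in 𝓝 (((0:ℝ), (0:ℝ), (0:ℝ)) : ℝ × ℝ × ℝ), toyF h A D ε φ (G y) = y := by
    rw [← hFa]; exact (hFc.hasStrictFDerivAt' hFd hn).eventually_right_inverse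
  set γ : ℝ → ℝ × ℝ × ℝ := fun η => (η, 0, 0) with hγ
  have hγc : ContDiff ℝ 1 γ := contDiff_id.prodMk contDiff_const
  have hγ0 : γ 0 = ((0:ℝ), (0:ℝ), (0:ℝ)) := rfl
  have hGc0 : ContDiffAt ℝ 1 G (γ 0) := hGc
  have hcurveC : ContDiffAt ℝ 1 (fun η => G (γ η)) 0 := hGc0.comp 0 hγc.contDiffAt
  have hσC : ContDiffAt ℝ 1 (fun η => (G (γ η)).2.1) 0 :=
    ((contDiff_fst.comp contDiff_snd).contDiffAt).comp 0 hcurveC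
  have hLC : ContDiffAt ℝ 1 (fun η => (G (γ η)).2.2) 0 :=
    ((contDiff_snd.comp contDiff_snd).contDiffAt).comp 0 hcurveC
  obtain ⟨u₁, hu₁, hσOn⟩ := hσC.contDiffOn le_rfl (by simp)
  obtain ⟨u₂, hu₂, hLOn⟩ := hLC.contDiffOn le_rfl (by simp)
  have hev : ∀ᶠ η in 𝓝 (0:ℝ), toyF h A D ε φ (G (γ η)) = γ η := by
    have ht : Filter.Tendsto γ (𝓝 0) (𝓝 (((0:ℝ), (0:ℝ), (0:ℝ)) : ℝ × ℝ × ℝ)) :=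
      hγc.continuous.continuousAt
    exact ht.eventually hGr
  have hmem : u₁ ∩ u₂ ∩ {η | toyF h A D ε φ (G (γ η)) = γ η} ∈ 𝓝 (0:ℝ) :=
    Filter.inter_mem (Filter.inter_mem hu₁ hu₂) hev
  obtain ⟨c, hc, hball⟩ := Metric.mem_nhds_iff.1 hmem
  have hIco : Ico (0:ℝ) c ⊆ Metric.ball 0 c := by
    intro x hx
    rw [Metric.mem_ball, Real.dist_eq, sub_zero, abs_of_nonneg hx.1]
    exact hx.2
  have hγd : HasDerivAt γ (((1:ℝ), (0:ℝ), (0:ℝ)) : ℝ × ℝ × ℝ) 0 :=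
    (hasDerivAt_id (0:ℝ)).prodMk ((hasDerivAt_const 0 (0:ℝ)).prodMk (hasDerivAt_const 0 (0:ℝ)))
  have hGf : HasFDerivAt G
      ((J.symm : (ℝ × ℝ × ℝ) ≃L[ℝ] (ℝ × ℝ × ℝ)) :
        (ℝ × ℝ × ℝ) →L[ℝ] (ℝ × ℝ × ℝ)) (γ 0) := hGs.hasFDerivAt
  have hcurved : HasDerivAt (fun η => G (γ η))
      (J.symm (((1:ℝ), (0:ℝ), (0:ℝ)) : ℝ × ℝ × ℝ)) 0 :=
    hGf.comp_hasDerivAt 0 hγd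
  have hval : J.symm (((1:ℝ), (0:ℝ), (0:ℝ)) : ℝ × ℝ × ℝ)
      = ((1:ℝ), D L₀ / (ε * A L₀ * Real.cos (σ₀ - φ)), (0:ℝ)) := by
    rw [hJdef, toyJ_symm_apply]
    norm_num
  rw [hval] at hcurved
  have hπ2 : HasFDerivAt (fun w : ℝ × ℝ × ℝ => w.2.1)
      ((ContinuousLinearMap.fst ℝ ℝ ℝ).comp (ContinuousLinearMap.snd ℝ ℝ (ℝ × ℝ)))
      (G (γ 0)) := hasFDerivAt_fst.comp _ hasFDerivAt_snd
  have hπ3 : HasFDerivAt (fun w : ℝ × ℝ × ℝ => w.2.2)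
      ((ContinuousLinearMap.snd ℝ ℝ ℝ).comp (ContinuousLinearMap.snd ℝ ℝ (ℝ × ℝ)))
      (G (γ 0)) := hasFDerivAt_snd.comp _ hasFDerivAt_snd
  have hσd : HasDerivAt (fun η => (G (γ η)).2.1)
      (D L₀ / (ε * A L₀ * Real.cos (σ₀ - φ))) 0 := by
    have := hπ2.comp_hasDerivAt 0 hcurved
    simp at this; exact this
  have hLd : HasDerivAt (fun η => (G (γ η)).2.2) (0:ℝ) 0 := by
    have := hπ3.comp_hasDerivAt 0 hcurved
    simp at this; exact this
  have hudiff : UniqueDiffWithinAt ℝ (Ico (0:ℝ) c) 0 := uniqueDiffOn_Ico 0 c 0 ⟨le_rfl, hc⟩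
  refine ⟨c, hc, fun η => (G (γ η)).2.1, fun η => (G (γ η)).2.2, ?_, ?_, ?_, ?_, ?_, ?_, ?_⟩
  · exact hσOn.mono fun x hx => (hball (hIco hx)).1.1
  · exact hLOn.mono fun x hx => (hball (hIco hx)).1.2
  · intro η hη
    have hFG : toyF h A D ε φ (G (γ η)) = γ η := (hball (hIco hη)).2
    have h1 : (G (γ η)).1 = η := congrArg Prod.fst hFG
    have h2 := congrArg (fun w : ℝ × ℝ × ℝ => w.2.1) hFG
    have h3 := congrArg (fun w : ℝ × ℝ × ℝ => w.2.2) hFG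
    simp only [toyF] at h2 h3
    rw [h1] at h3
    constructor
    · simpa [hγ] using h2
    · simpa [hγ] using h3
  · show (G (γ 0)).2.1 = σ₀
    rw [hγ0, hGa]
  · show (G (γ 0)).2.2 = L₀
    rw [hγ0, hGa]
  · exact (hLd.hasDerivWithinAt).derivWithin hudiff
  · exact (hσd.hasDerivWithinAt).derivWithin hudiff

/-- First-order perturbative formula of the paper's Theorem 1: for small
`ε > 0`, letting `L₀` be the unique solution near `Lsec` of
`h'(L) + ε A'(L) cos (σ₀ - φ) = 0`, there is a `C¹` curve
`η ↦ (σ_d(η), L_d(η))` of equilibria of the dissipative toy model with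
`(σ_d(0), L_d(0)) = (σ₀, L₀)`, `L_d'(0) = 0` and
`σ_d'(0) = D(L₀)/(ε A(L₀) cos (σ₀ - φ))`: the drag shifts the equilibrium
along the `σ` axis while leaving `L` unchanged to first order. -/
theorem dissipative_equilibrium_first_order
    (h A D : ℝ → ℝ) (Lsec σ₀ φ : ℝ)
    (hh : ContDiffAt ℝ 2 h Lsec) (hA : ContDiffAt ℝ 2 A Lsec)
    (hD : ContDiffAt ℝ 2 D Lsec)
    (hcrit : deriv h Lsec = 0) (hnd : deriv (deriv h) Lsec ≠ 0)
    (hApos : 0 < A Lsec) (hsin : Real.sin (σ₀ - φ) = 0) :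
    ∃ ε₀ > (0:ℝ), ∀ ε : ℝ, 0 < ε → ε < ε₀ →
      ∃ r > (0:ℝ), ∃ L₀ : ℝ,
        (|L₀ - Lsec| < r ∧
          deriv h L₀ + ε * deriv A L₀ * Real.cos (σ₀ - φ) = 0 ∧
          (∀ L' : ℝ, |L' - Lsec| < r →
            deriv h L' + ε * deriv A L' * Real.cos (σ₀ - φ) = 0 → L' = L₀)) ∧
        ∃ c > (0:ℝ), ∃ σd Ld : ℝ → ℝ,
          ContDiffOn ℝ 1 σd (Ico 0 c) ∧ ContDiffOn ℝ 1 Ld (Ico 0 c) ∧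
          (∀ η ∈ Ico (0:ℝ) c,
            deriv h (Ld η) + ε * deriv A (Ld η) * Real.cos (σd η - φ) = 0 ∧
            ε * A (Ld η) * Real.sin (σd η - φ) - η * D (Ld η) = 0) ∧
          σd 0 = σ₀ ∧ Ld 0 = L₀ ∧
          derivWithin Ld (Ico 0 c) 0 = 0 ∧
          derivWithin σd (Ico 0 c) 0 =
            D L₀ / (ε * A L₀ * Real.cos (σ₀ - φ)) := by
  have hc2 : Real.cos (σ₀ - φ) ^ 2 = 1 := by
    have := Real.sin_sq_add_cos_sq (σ₀ - φ)
    rw [hsin] at this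
    nlinarith
  have hcabs : |Real.cos (σ₀ - φ)| = 1 := by
    rcases mul_eq_zero.1 (by nlinarith :
        (Real.cos (σ₀ - φ) - 1) * (Real.cos (σ₀ - φ) + 1) = 0) with h' | h'
    · rw [show Real.cos (σ₀ - φ) = 1 by linarith]; norm_num
    · rw [show Real.cos (σ₀ - φ) = -1 by linarith]; norm_num
  have hc0 : Real.cos (σ₀ - φ) ≠ 0 := by
    intro h0; rw [h0] at hc2; norm_num at hc2
  -- a common open neighborhood of `Lsec` where everything is `C²`
  obtain ⟨u₁, hu₁, hhU⟩ := hh.contDiffOn le_rfl (by simp)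
  obtain ⟨u₂, hu₂, hAU⟩ := hA.contDiffOn le_rfl (by simp)
  obtain ⟨u₃, hu₃, hDU⟩ := hD.contDiffOn le_rfl (by simp)
  set V := interior u₁ ∩ interior u₂ ∩ interior u₃ with hVdef
  have hVopen : IsOpen V := (isOpen_interior.inter isOpen_interior).inter isOpen_interior
  have hLsecV : Lsec ∈ V :=
    ⟨⟨mem_interior_iff_mem_nhds.2 hu₁, mem_interior_iff_mem_nhds.2 hu₂⟩,
      mem_interior_iff_mem_nhds.2 hu₃⟩
  have hhV : ContDiffOn ℝ 2 h V := hhU.mono fun x hx => interior_subset hx.1.1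
  have hAV : ContDiffOn ℝ 2 A V := hAU.mono fun x hx => interior_subset hx.1.2
  have hDV : ContDiffOn ℝ 2 D V := hDU.mono fun x hx => interior_subset hx.2
  have hdh : ContDiffOn ℝ 1 (deriv h) V := hhV.deriv_of_isOpen hVopen (by norm_num)
  have hdA : ContDiffOn ℝ 1 (deriv A) V := hAV.deriv_of_isOpen hVopen (by norm_num)
  have hbcont : ContinuousOn (deriv (deriv h)) V :=
    hdh.continuousOn_deriv_of_isOpen hVopen le_rfl
  have hacont : ContinuousOn (deriv (deriv A)) V :=
    hdA.continuousOn_deriv_of_isOpen hVopen le_rfl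
  have hdAcont : ContinuousOn (deriv A) V := hdA.continuousOn
  have hκ : (0:ℝ) < |deriv (deriv h) Lsec| := abs_pos.2 hnd
  -- eventual estimates near Lsec
  have hev1 : ∀ᶠ L in 𝓝 Lsec,
      |deriv (deriv h) L - deriv (deriv h) Lsec| < |deriv (deriv h) Lsec| / 4 := by
    have hctsb : ContinuousAt (deriv (deriv h)) Lsec :=
      hbcont.continuousAt (hVopen.mem_nhds hLsecV)
    have h1 : Metric.ball (deriv (deriv h) Lsec) (|deriv (deriv h) Lsec| / 4)
        ∈ 𝓝 (deriv (deriv h) Lsec) := Metric.ball_mem_nhds _ (by positivity)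
    filter_upwards [hctsb h1] with L hL using by simpa [Real.dist_eq] using hL
  have hev2 : ∀ᶠ L in 𝓝 Lsec, A Lsec / 2 < A L :=
    hA.continuousAt.eventually (eventually_gt_nhds (half_lt_self hApos))
  have hev3 : ∀ᶠ L in 𝓝 Lsec, L ∈ V := hVopen.mem_nhds hLsecV
  obtain ⟨δ', hδ', hball'⟩ := Metric.eventually_nhds_iff_ball.1 ((hev1.and hev2).and hev3)
  set δ := δ' / 2 with hδdef
  have hδpos : 0 < δ := by positivity
  have hIccB : Icc (Lsec - δ) (Lsec + δ) ⊆ Metric.ball Lsec δ' := by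
    intro x hx
    rw [Metric.mem_ball, Real.dist_eq]
    have h1 : |x - Lsec| ≤ δ := abs_le.2 ⟨by linarith [hx.1], by linarith [hx.2]⟩
    have : δ < δ' := by rw [hδdef]; linarith
    linarith
  have hIccV : Icc (Lsec - δ) (Lsec + δ) ⊆ V := fun x hx => (hball' x (hIccB hx)).2
  -- bounds on compact interval
  obtain ⟨M₁, hM₁⟩ := (isCompact_Icc (a := Lsec - δ) (b := Lsec + δ)).exists_bound_of_continuousOn
    (hacont.mono hIccV)
  obtain ⟨M₂, hM₂⟩ := (isCompact_Icc (a := Lsec - δ) (b := Lsec + δ)).exists_bound_of_continuousOn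
    (hdAcont.mono hIccV)
  set M := max (max M₁ M₂) 1 with hMdef
  have hMpos : (0:ℝ) < M := lt_of_lt_of_le one_pos (le_max_right _ _)
  have hM₁' : ∀ x ∈ Icc (Lsec - δ) (Lsec + δ), |deriv (deriv A) x| ≤ M := fun x hx =>
    le_trans (by simpa [Real.norm_eq_abs] using hM₁ x hx)
      (le_trans (le_max_left _ _) (le_max_left _ _))
  have hM₂' : ∀ x ∈ Icc (Lsec - δ) (Lsec + δ), |deriv A x| ≤ M := fun x hx =>
    le_trans (by simpa [Real.norm_eq_abs] using hM₂ x hx)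
      (le_trans (le_max_right _ _) (le_max_left _ _))
  refine ⟨min (|deriv (deriv h) Lsec| / (4 * M)) (|deriv (deriv h) Lsec| * δ / (4 * M)),
    lt_min (by positivity) (by positivity), ?_⟩
  intro ε hε hεlt
  have hε1 : ε * M < |deriv (deriv h) Lsec| / 4 := by
    have h41 := (lt_min_iff.1 hεlt).1
    rw [lt_div_iff₀ (by positivity : (0:ℝ) < 4 * M)] at h41
    nlinarith
  have hε2 : ε * M < |deriv (deriv h) Lsec| * δ / 4 := by
    have h42 := (lt_min_iff.1 hεlt).2
    rw [lt_div_iff₀ (by positivity : (0:ℝ) < 4 * M)] at h42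
    nlinarith
  -- sign normalisation
  obtain ⟨s, hs1, hsκ⟩ : ∃ s : ℝ, |s| = 1 ∧ s * deriv (deriv h) Lsec = |deriv (deriv h) Lsec| := by
    rcases abs_choice (deriv (deriv h) Lsec) with h' | h'
    · exact ⟨1, by norm_num, by linarith⟩
    · exact ⟨-1, by norm_num, by linarith⟩
  have hs0 : s ≠ 0 := by
    intro h0; rw [h0] at hs1; norm_num at hs1
  -- derivative facts on the interval
  have hder : ∀ x ∈ Icc (Lsec - δ) (Lsec + δ),
      HasDerivAt (fun L => s * (deriv h L + ε * deriv A L * Real.cos (σ₀ - φ)))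
        (s * (deriv (deriv h) x + ε * deriv (deriv A) x * Real.cos (σ₀ - φ))) x := by
    intro x hx
    have hxV : x ∈ V := hIccV hx
    have hx1 : HasDerivAt (deriv h) (deriv (deriv h) x) x :=
      ((hdh.contDiffAt (hVopen.mem_nhds hxV)).differentiableAt one_ne_zero).hasDerivAt
    have hx2 : HasDerivAt (deriv A) (deriv (deriv A) x) x :=
      ((hdA.contDiffAt (hVopen.mem_nhds hxV)).differentiableAt one_ne_zero).hasDerivAt
    exact ((hx1.add ((hx2.const_mul ε).mul_const _)).const_mul s)
  have hlb : ∀ x ∈ Icc (Lsec - δ) (Lsec + δ),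
      |deriv (deriv h) Lsec| / 2 ≤
        s * (deriv (deriv h) x + ε * deriv (deriv A) x * Real.cos (σ₀ - φ)) := by
    intro x hx
    have hb := ((hball' x (hIccB hx)).1).1
    have e1 : |s * (deriv (deriv h) x - deriv (deriv h) Lsec)| < |deriv (deriv h) Lsec| / 4 := by
      rw [abs_mul, hs1, one_mul]; exact hb
    have e2 : |s * (ε * deriv (deriv A) x * Real.cos (σ₀ - φ))| ≤ ε * M := by
      rw [abs_mul, hs1, one_mul, abs_mul, abs_mul, hcabs, mul_one, abs_of_pos hε]
      exact mul_le_mul_of_nonneg_left (hM₁' x hx) hε.le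
    have e1' := abs_lt.1 e1
    have e2' := abs_le.1 e2
    have hgx : s * (deriv (deriv h) x + ε * deriv (deriv A) x * Real.cos (σ₀ - φ)) =
        |deriv (deriv h) Lsec| + s * (deriv (deriv h) x - deriv (deriv h) Lsec) +
          s * (ε * deriv (deriv A) x * Real.cos (σ₀ - φ)) := by
      rw [← hsκ]; ring
    rw [hgx]
    linarith [e1'.1, e2'.1, hε1]
  have hsmall : |s * (deriv h Lsec + ε * deriv A Lsec * Real.cos (σ₀ - φ))| <
      |deriv (deriv h) Lsec| / 2 * δ := by
    rw [hcrit, zero_add, abs_mul, hs1, one_mul, abs_mul, abs_mul, hcabs, mul_one,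
      abs_of_pos hε]
    have hLsecIcc : Lsec ∈ Icc (Lsec - δ) (Lsec + δ) := by
      constructor <;> linarith
    have := mul_le_mul_of_nonneg_left (hM₂' Lsec hLsecIcc) hε.le
    have h4 : |deriv (deriv h) Lsec| * δ / 4 < |deriv (deriv h) Lsec| / 2 * δ := by
      nlinarith
    linarith
  obtain ⟨L₀, hL₀lt, hgL₀, huniq⟩ := aux_zero_of_deriv_lb
    (fun L => s * (deriv h L + ε * deriv A L * Real.cos (σ₀ - φ)))
    (fun x => s * (deriv (deriv h) x + ε * deriv (deriv A) x * Real.cos (σ₀ - φ)))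
    Lsec δ (|deriv (deriv h) Lsec| / 2) hδpos (by positivity) hder hlb hsmall
  have hfL₀ : deriv h L₀ + ε * deriv A L₀ * Real.cos (σ₀ - φ) = 0 := by
    rcases mul_eq_zero.1 hgL₀ with h' | h'
    · exact absurd h' hs0
    · exact h'
  have hL₀Icc : L₀ ∈ Icc (Lsec - δ) (Lsec + δ) := by
    have := abs_lt.1 hL₀lt
    constructor <;> linarith [this.1, this.2]
  have hL₀V : L₀ ∈ V := hIccV hL₀Icc
  have hAL₀ : 0 < A L₀ := lt_trans (by positivity) ((hball' L₀ (hIccB hL₀Icc)).1).2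
  have hq0 : deriv (deriv h) L₀ + ε * deriv (deriv A) L₀ * Real.cos (σ₀ - φ) ≠ 0 := by
    intro h0
    have hgl := hlb L₀ hL₀Icc
    rw [h0, mul_zero] at hgl
    linarith
  have hp0 : ε * A L₀ * Real.cos (σ₀ - φ) ≠ 0 :=
    mul_ne_zero (mul_ne_zero hε.ne' hAL₀.ne') hc0
  have hdh1 : ContDiffAt ℝ 1 (deriv h) L₀ := hdh.contDiffAt (hVopen.mem_nhds hL₀V)
  have hdA1 : ContDiffAt ℝ 1 (deriv A) L₀ := hdA.contDiffAt (hVopen.mem_nhds hL₀V)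
  have hA1 : ContDiffAt ℝ 1 A L₀ :=
    (hAV.contDiffAt (hVopen.mem_nhds hL₀V)).of_le (by norm_num)
  have hD1 : ContDiffAt ℝ 1 D L₀ :=
    (hDV.contDiffAt (hVopen.mem_nhds hL₀V)).of_le (by norm_num)
  refine ⟨δ, hδpos, L₀, ⟨hL₀lt, hfL₀, fun L' hL' hf' => huniq L' hL' (by rw [hf', mul_zero])⟩, ?_⟩
  exact toy_curve hdh1 hdA1 hA1 hD1 hsin hfL₀ hq0 hp0
end

section
/- Let h, A, D : ℝ → ℝ be twice continuously differentiable on a neighborhood of L^sec ∈ ℝ with h'(L^sec) = 0, h''(L^sec) ≠ 0 and A(L^sec) > 0, and let σ₀, φ ∈ ℝ satisfy sin(σ₀ − φ) = 0. Then there exist positive constants γ₁, γ₂, γ₃ (depending only on h, A, D, σ₀, φ and the neighborhood) such that for every δ ∈ (0, 1) and all parameters ε > 0, η ≥ 0 satisfying |η D(L₀)/(ε A(L₀))| ≤ 1 − δ and γ₁ ε + γ₂ η + γ₃ ε² < δ, where L₀ = L₀(ε) is the unique solution near L^sec of h'(L) + ε A'(L) cos(σ₀ − φ) = 0, the dissipative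 toy model dσ/dt = h'(L) + ε A'(L) cos(σ − φ), dL/dt = ε A(L) sin(σ − φ) − η D(L) admits an equilibrium point. -/
open Real Set Topology Filter

set_option maxHeartbeats 1000000 in

private lemma c2_local {f : ℝ → ℝ} {x : ℝ} (hf : ContDiffAt ℝ 2 f x) :
    ∃ t : Set ℝ, IsOpen t ∧ x ∈ t ∧
      (∀ y ∈ t, DifferentiableAt ℝ f y) ∧
      (∀ y ∈ t, DifferentiableAt ℝ (deriv f) y) ∧
      ContinuousOn (deriv f) t ∧ ContinuousOn (deriv (deriv f)) t := by
  obtain ⟨u, hu, hcd⟩ := hf.contDiffOn le_rfl (by norm_num)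
  obtain ⟨t, hts, ht, hxt⟩ := mem_nhds_iff.mp hu
  have hcd' : ContDiffOn ℝ 2 f t := hcd.mono hts
  have hd1 : ContDiffOn ℝ 1 (deriv f) t := hcd'.deriv_of_isOpen ht (by norm_num)
  refine ⟨t, ht, hxt, ?_, ?_, ?_, ?_⟩
  · exact fun y hy => ((hcd'.differentiableOn (by norm_num)) y hy).differentiableAt
      (ht.mem_nhds hy)
  · exact fun y hy => ((hd1.differentiableOn (by norm_num)) y hy).differentiableAt (ht.mem_nhds hy)
  · exact hcd'.continuousOn_deriv_of_isOpen ht (by norm_num)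
  · exact hd1.continuousOn_deriv_of_isOpen ht le_rfl

private lemma lip_bound (f : ℝ → ℝ) {C x y : ℝ} (hxy : x ≤ y)
    (hdiff : ∀ z ∈ Icc x y, DifferentiableAt ℝ f z)
    (hbnd : ∀ z ∈ Icc x y, |deriv f z| ≤ C) :
    |f y - f x| ≤ C * (y - x) := by
  rcases eq_or_lt_of_le hxy with rfl | hlt
  · rw [sub_self, sub_self, abs_zero, mul_zero]
  · obtain ⟨c, hc, hceq⟩ := exists_hasDerivAt_eq_slope f (deriv f) hlt
      (fun z hz => (hdiff z hz).continuousAt.continuousWithinAt)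
      (fun z hz => (hdiff z ⟨hz.1.le, hz.2.le⟩).hasDerivAt)
    have h1 : f y - f x = deriv f c * (y - x) := by
      have hne : y - x ≠ 0 := sub_ne_zero.2 hlt.ne'
      rw [hceq, div_mul_cancel₀ _ hne]
    have h2 := hbnd c ⟨hc.1.le, hc.2.le⟩
    rw [h1, abs_mul, abs_of_pos (by linarith : (0:ℝ) < y - x)]
    exact mul_le_mul_of_nonneg_right h2 (by linarith)

private lemma mono_bound (f : ℝ → ℝ) {τ m x y : ℝ} (hxy : x ≤ y) (hm : 0 ≤ m)
    (hdiff : ∀ z ∈ Icc x y, DifferentiableAt ℝ f z)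
    (hbnd : ∀ z ∈ Icc x y, m ≤ τ * deriv f z) :
    m * (y - x) ≤ τ * (f y - f x) := by
  rcases eq_or_lt_of_le hxy with rfl | hlt
  · rw [sub_self, sub_self, mul_zero, mul_zero]
  · obtain ⟨c, hc, hceq⟩ := exists_hasDerivAt_eq_slope f (deriv f) hlt
      (fun z hz => (hdiff z hz).continuousAt.continuousWithinAt)
      (fun z hz => (hdiff z ⟨hz.1.le, hz.2.le⟩).hasDerivAt)
    have h1 : f y - f x = deriv f c * (y - x) := by
      have hne : y - x ≠ 0 := sub_ne_zero.2 hlt.ne'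
      rw [hceq, div_mul_cancel₀ _ hne]
    have h2 := hbnd c ⟨hc.1.le, hc.2.le⟩
    have : τ * (f y - f x) = (τ * deriv f c) * (y - x) := by rw [h1]; ring
    rw [this]
    exact mul_le_mul_of_nonneg_right h2 (by linarith)

set_option maxHeartbeats 2000000 in
/-- Simplified existence condition (Remark after the paper's Theorem 1):
there exist positive constants `γ₁, γ₂, γ₃` (and a radius `r`) such that for
every `δ ∈ (0,1)` and all `ε > 0`, `η ≥ 0` with
`|η D(L₀)/(ε A(L₀))| ≤ 1 - δ` and `γ₁ ε + γ₂ η + γ₃ ε² < δ`,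
where `L₀` solves `h'(L) + ε A'(L) cos (σ₀ - φ) = 0` near `Lsec`,
the dissipative toy model admits an equilibrium point. -/
theorem dissipative_equilibrium_simplified_condition
    (h A D : ℝ → ℝ) (Lsec σ₀ φ : ℝ)
    (hh : ContDiffAt ℝ 2 h Lsec) (hA : ContDiffAt ℝ 2 A Lsec)
    (hD : ContDiffAt ℝ 2 D Lsec)
    (hcrit : deriv h Lsec = 0) (hnd : deriv (deriv h) Lsec ≠ 0)
    (hApos : 0 < A Lsec) (hsin : Real.sin (σ₀ - φ) = 0) :
    ∃ r > (0:ℝ), ∃ γ₁ > (0:ℝ), ∃ γ₂ > (0:ℝ), ∃ γ₃ > (0:ℝ),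
      ∀ δ : ℝ, 0 < δ → δ < 1 →
        ∀ ε η L₀ : ℝ, 0 < ε → 0 ≤ η →
          |L₀ - Lsec| < r →
          deriv h L₀ + ε * deriv A L₀ * Real.cos (σ₀ - φ) = 0 →
          |η * D L₀ / (ε * A L₀)| ≤ 1 - δ →
          γ₁ * ε + γ₂ * η + γ₃ * ε ^ 2 < δ →
          ∃ σd Ld : ℝ,
            deriv h Ld + ε * deriv A Ld * Real.cos (σd - φ) = 0 ∧
            ε * A Ld * Real.sin (σd - φ) - η * D Ld = 0 := by
  obtain ⟨th, oth, hxh, hdh, hdh2, hch, hch2⟩ := c2_local hh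
  obtain ⟨tA, otA, hxA, hdA, hdA2, hcA, _⟩ := c2_local hA
  set g : ℝ → ℝ := fun L => D L / A L with hg_def
  have hgC : ContDiffAt ℝ 2 g Lsec := hD.div hA (ne_of_gt hApos)
  obtain ⟨tg, otg, hxg, hdg, _, hcg, _⟩ := c2_local hgC
  set m₀ := deriv (deriv h) Lsec with hm₀def
  set m : ℝ := |m₀| / 2 with hmdef
  have hm : 0 < m := by
    have : 0 < |m₀| := abs_pos.2 hnd
    rw [hmdef]; linarith
  set τ : ℝ := if 0 ≤ m₀ then 1 else -1 with hτdef
  have hτ1 : |τ| = 1 := by rw [hτdef]; split <;> norm_num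
  have hτm : τ * m₀ = |m₀| := by
    rw [hτdef]; split
    · rw [abs_of_nonneg ‹_›, one_mul]
    · rw [abs_of_neg (lt_of_not_ge ‹_›)]; ring
  set MA : ℝ := |deriv A Lsec| + 1 with hMAdef
  have hMA : 0 < MA := by positivity
  set Lg : ℝ := |deriv g Lsec| + 1 with hLgdef
  have hLg : 0 < Lg := by positivity
  -- eventual bounds near Lsec
  have ev1 : ∀ᶠ L in 𝓝 Lsec, L ∈ th := oth.mem_nhds hxh
  have ev2 : ∀ᶠ L in 𝓝 Lsec, L ∈ tA := otA.mem_nhds hxA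
  have ev3 : ∀ᶠ L in 𝓝 Lsec, L ∈ tg := otg.mem_nhds hxg
  have cd2 : ContinuousAt (deriv (deriv h)) Lsec := (hch2.continuousAt (oth.mem_nhds hxh))
  have ev4 : ∀ᶠ L in 𝓝 Lsec, m ≤ τ * deriv (deriv h) L := by
    have := Metric.tendsto_nhds.1 cd2 m hm
    refine this.mono fun L hL => ?_
    rw [Real.dist_eq] at hL
    have h1 : |τ * (deriv (deriv h) L - m₀)| < m := by
      rw [abs_mul, hτ1, one_mul]; exact hL
    have h2 : τ * deriv (deriv h) L = τ * m₀ + τ * (deriv (deriv h) L - m₀) := by ring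
    have h3 := neg_abs_le (τ * (deriv (deriv h) L - m₀))
    rw [h2, hτm]
    have h4 : |m₀| = 2 * m := by rw [hmdef]; ring
    linarith
  have ev5 : ∀ᶠ L in 𝓝 Lsec, A Lsec / 2 < A L := by
    have := Metric.tendsto_nhds.1 hA.continuousAt (A Lsec / 2) (by linarith)
    refine this.mono fun L hL => ?_
    rw [Real.dist_eq] at hL
    have := abs_lt.1 hL
    linarith [this.1]
  have ev6 : ∀ᶠ L in 𝓝 Lsec, |deriv A L| ≤ MA := by
    have := Metric.tendsto_nhds.1 (hcA.continuousAt (otA.mem_nhds hxA)) 1 one_pos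
    refine this.mono fun L hL => ?_
    rw [Real.dist_eq] at hL
    rw [hMAdef]
    linarith [abs_sub_abs_le_abs_sub (deriv A L) (deriv A Lsec)]
  have ev7 : ∀ᶠ L in 𝓝 Lsec, |deriv g L| ≤ Lg := by
    have := Metric.tendsto_nhds.1 (hcg.continuousAt (otg.mem_nhds hxg)) 1 one_pos
    refine this.mono fun L hL => ?_
    rw [Real.dist_eq] at hL
    rw [hLgdef]
    linarith [abs_sub_abs_le_abs_sub (deriv g L) (deriv g Lsec)]
  obtain ⟨ρ, hρ, hP⟩ := Metric.eventually_nhds_iff.1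
    ((((((ev1.and ev2).and ev3).and ev4).and ev5).and ev6).and ev7)
  set r₀ : ℝ := ρ / 2 with hr₀def
  have hr₀ : 0 < r₀ := by rw [hr₀def]; linarith
  have key : ∀ L : ℝ, |L - Lsec| ≤ r₀ →
      ((((((L ∈ th ∧ L ∈ tA) ∧ L ∈ tg) ∧ m ≤ τ * deriv (deriv h) L) ∧ A Lsec / 2 < A L) ∧
        |deriv A L| ≤ MA) ∧ |deriv g L| ≤ Lg) := by
    intro L hL
    exact hP (by rw [Real.dist_eq]; rw [hr₀def] at hL; linarith)
  set K : ℝ := (2 * MA + 1) / m with hKdef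
  have hK : 0 < K := by rw [hKdef]; positivity
  have hmK : m * K = 2 * MA + 1 := by rw [hKdef]; field_simp
  clear_value m₀ m τ MA Lg r₀ K
  refine ⟨r₀ / 2, by positivity, 2 * K / r₀, by positivity, 2 * Lg * K + 1, by positivity,
    1, one_pos, ?_⟩
  intro δ hδ0 hδ1 ε η L₀ hε hη hL₀r hL₀eq hs0 hsmall
  -- basic parameter bounds
  have hη2 : 0 ≤ (2 * Lg * K + 1) * η := by positivity
  have hε2 : 0 ≤ 1 * ε ^ 2 := by positivity
  have hγ1ε : 2 * K / r₀ * ε < δ := by linarith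
  have hKε : K * ε < r₀ / 2 := by
    have h1 : 2 * K / r₀ * ε < 1 := by linarith
    have h2 : 2 * K * ε < r₀ := by
      have := (div_lt_iff₀ hr₀).1 (by rw [div_mul_eq_mul_div] at h1; exact h1)
      linarith
    linarith
  have hηLgK : η * Lg * K < δ / 2 := by
    have hA0 : 0 ≤ 2 * K / r₀ * ε := by positivity
    have hexp : (2 * Lg * K + 1) * η = 2 * (η * Lg * K) + η := by ring
    linarith
  set lo : ℝ := L₀ - K * ε with hlodef
  set hi : ℝ := L₀ + K * ε with hhidef
  have hKε0 : 0 < K * ε := by positivity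
  have hlohi : lo ≤ hi := by rw [hlodef, hhidef]; linarith
  have hL₀ball : |L₀ - Lsec| ≤ r₀ := by linarith
  have hwin : ∀ L ∈ Icc lo hi, |L - Lsec| ≤ r₀ := by
    intro L hL
    have h1 : |L - L₀| ≤ K * ε := by
      rw [abs_le]; constructor
      · have := hL.1; rw [hlodef] at this; linarith
      · have := hL.2; rw [hhidef] at this; linarith
    calc |L - Lsec| ≤ |L - L₀| + |L₀ - Lsec| := abs_sub_le L L₀ Lsec
      _ ≤ K * ε + r₀ / 2 := by linarith
      _ ≤ r₀ := by linarith
  -- the cosine constant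
  set c : ℝ := Real.cos (σ₀ - φ) with hcdef
  have hc2 : c * c = 1 := by
    have := Real.sin_sq_add_cos_sq (σ₀ - φ)
    rw [hsin] at this
    have h0 : c ^ 2 = 1 := by simpa using this
    linear_combination h0
  have hc : c = 1 ∨ c = -1 := mul_self_eq_one_iff.1 hc2
  have habsc : |c| = 1 := by rcases hc with h1 | h1 <;> rw [h1] <;> norm_num
  -- the function s
  set s : ℝ → ℝ := fun L => (η / ε) * g L with hsdef
  have hs_eq : ∀ L, s L = η * D L / (ε * A L) := by
    intro L
    rw [hsdef]; simp only [hg_def]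
    rw [div_mul_div_comm]
  have hs0' : |s L₀| ≤ 1 - δ := by rw [hs_eq]; exact hs0
  -- Lipschitz bound for g, hence bound for s on the window
  have hsub : ∀ L ∈ Icc lo hi, ∀ z ∈ Icc lo hi, True := fun _ _ _ _ => trivial
  have hg_lip : ∀ L ∈ Icc lo hi, |g L - g L₀| ≤ Lg * (K * ε) := by
    intro L hL
    have hL₀mem : L₀ ∈ Icc lo hi := ⟨by rw [hlodef]; linarith, by rw [hhidef]; linarith⟩
    have hdiffz : ∀ z ∈ Icc lo hi, DifferentiableAt ℝ g z :=
      fun z hz => hdg z (key z (hwin z hz)).1.1.1.1.2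
    have hbndz : ∀ z ∈ Icc lo hi, |deriv g z| ≤ Lg :=
      fun z hz => (key z (hwin z hz)).2
    rcases le_total L₀ L with hle | hle
    · have hsubI : Icc L₀ L ⊆ Icc lo hi := Icc_subset_Icc hL₀mem.1 hL.2
      have := lip_bound g hle (fun z hz => hdiffz z (hsubI hz)) (fun z hz => hbndz z (hsubI hz))
      have hLle : L - L₀ ≤ K * ε := by
        have := hL.2; rw [hhidef] at this; linarith
      calc |g L - g L₀| ≤ Lg * (L - L₀) := this
        _ ≤ Lg * (K * ε) := mul_le_mul_of_nonneg_left hLle hLg.le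
    · have hsubI : Icc L L₀ ⊆ Icc lo hi := Icc_subset_Icc hL.1 hL₀mem.2
      have := lip_bound g hle (fun z hz => hdiffz z (hsubI hz)) (fun z hz => hbndz z (hsubI hz))
      have hLle : L₀ - L ≤ K * ε := by
        have := hL.1; rw [hlodef] at this; linarith
      rw [abs_sub_comm]
      calc |g L₀ - g L| ≤ Lg * (L₀ - L) := this
        _ ≤ Lg * (K * ε) := mul_le_mul_of_nonneg_left hLle hLg.le
  have hs_bd : ∀ L ∈ Icc lo hi, |s L| ≤ 1 - δ / 2 := by
    intro L hL
    have h1 : |s L - s L₀| ≤ η * Lg * K := by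
      have h2 : s L - s L₀ = (η / ε) * (g L - g L₀) := by rw [hsdef]; ring
      rw [h2, abs_mul, abs_of_nonneg (by positivity : (0:ℝ) ≤ η / ε)]
      have := hg_lip L hL
      have h3 : η / ε * (Lg * (K * ε)) = η * Lg * K := by field_simp
      calc η / ε * |g L - g L₀| ≤ η / ε * (Lg * (K * ε)) := by
            apply mul_le_mul_of_nonneg_left this (by positivity)
        _ = η * Lg * K := h3
    calc |s L| = |s L₀ + (s L - s L₀)| := by ring_nf
      _ ≤ |s L₀| + |s L - s L₀| := abs_add_le _ _
      _ ≤ (1 - δ) + η * Lg * K := by linarith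
      _ ≤ 1 - δ / 2 := by linarith
  -- the function F and its sign change
  set F : ℝ → ℝ := fun L => deriv h L + ε * deriv A L * (c * Real.sqrt (1 - s L ^ 2))
    with hFdef
  have hsqrt_le : ∀ L : ℝ, Real.sqrt (1 - s L ^ 2) ≤ 1 := by
    intro L
    have h1 : 1 - s L ^ 2 ≤ 1 := by linarith [sq_nonneg (s L)]
    calc Real.sqrt (1 - s L ^ 2) ≤ Real.sqrt 1 := Real.sqrt_le_sqrt h1
      _ = 1 := Real.sqrt_one
  have hFd : ∀ L : ℝ, |L - Lsec| ≤ r₀ → |F L - deriv h L| ≤ ε * MA := by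
    intro L hL
    have h1 : F L - deriv h L = ε * deriv A L * (c * Real.sqrt (1 - s L ^ 2)) := by
      rw [hFdef]; ring
    rw [h1, abs_mul, abs_mul, abs_mul, abs_of_pos hε, habsc, one_mul,
      abs_of_nonneg (Real.sqrt_nonneg _)]
    have h2 := (key L hL).1.2
    calc ε * |deriv A L| * Real.sqrt (1 - s L ^ 2) ≤ ε * MA * 1 := by
          apply mul_le_mul (mul_le_mul_of_nonneg_left h2 hε.le) (hsqrt_le L)
            (Real.sqrt_nonneg _) (by positivity)
      _ = ε * MA := mul_one _
  have hL₀key := key L₀ hL₀ball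
  have hdhL₀ : deriv h L₀ = -(ε * deriv A L₀ * c) := by linarith [hL₀eq]
  have hdhL₀bd : |deriv h L₀| ≤ ε * MA := by
    rw [hdhL₀, abs_neg, abs_mul, abs_mul, abs_of_pos hε, habsc, mul_one]
    exact mul_le_mul_of_nonneg_left hL₀key.1.2 hε.le
  have hdiffdh : ∀ z ∈ Icc lo hi, DifferentiableAt ℝ (deriv h) z :=
    fun z hz => hdh2 z (key z (hwin z hz)).1.1.1.1.1.1
  have hbnddh : ∀ z ∈ Icc lo hi, m ≤ τ * deriv (deriv h) z :=
    fun z hz => (key z (hwin z hz)).1.1.1.2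
  have hL₀mem : L₀ ∈ Icc lo hi := ⟨by rw [hlodef]; linarith, by rw [hhidef]; linarith⟩
  have hhimem : hi ∈ Icc lo hi := ⟨hlohi, le_rfl⟩
  have hlomem : lo ∈ Icc lo hi := ⟨le_rfl, hlohi⟩
  have hmono_hi : m * (K * ε) ≤ τ * (deriv h hi - deriv h L₀) := by
    have hsubI : Icc L₀ hi ⊆ Icc lo hi := Icc_subset_Icc hL₀mem.1 le_rfl
    have := mono_bound (deriv h) hL₀mem.2 hm.le
      (fun z hz => hdiffdh z (hsubI hz)) (fun z hz => hbnddh z (hsubI hz))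
    have h1 : hi - L₀ = K * ε := by rw [hhidef]; ring
    rw [h1] at this; exact this
  have hmono_lo : m * (K * ε) ≤ τ * (deriv h L₀ - deriv h lo) := by
    have hsubI : Icc lo L₀ ⊆ Icc lo hi := Icc_subset_Icc le_rfl hL₀mem.2
    have := mono_bound (deriv h) hL₀mem.1 hm.le
      (fun z hz => hdiffdh z (hsubI hz)) (fun z hz => hbnddh z (hsubI hz))
    have h1 : L₀ - lo = K * ε := by rw [hlodef]; ring
    rw [h1] at this; exact this
  set G : ℝ → ℝ := fun L => τ * F L with hGdef
  have habs_mul_τ : ∀ x : ℝ, |τ * x| = |x| := by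
    intro x; rw [abs_mul, hτ1, one_mul]
  have hmKε : m * (K * ε) = (2 * MA + 1) * ε := by rw [← hmK]; ring
  have hG_hi : ε ≤ G hi := by
    have h1 : τ * (F hi - deriv h hi) ≥ -(ε * MA) := by
      have := hFd hi (hwin hi hhimem)
      have h2 := neg_abs_le (τ * (F hi - deriv h hi))
      rw [habs_mul_τ] at h2
      linarith
    have h3 : τ * deriv h L₀ ≥ -(ε * MA) := by
      have h4 := neg_abs_le (τ * deriv h L₀)
      rw [habs_mul_τ] at h4
      linarith
    have h5 : G hi = τ * deriv h L₀ + τ * (deriv h hi - deriv h L₀) + τ * (F hi - deriv h hi) := by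
      rw [hGdef]; ring
    rw [h5]
    rw [hmKε] at hmono_hi
    linarith
  have hG_lo : G lo ≤ -ε := by
    have h1 : τ * (F lo - deriv h lo) ≤ ε * MA := by
      have := hFd lo (hwin lo hlomem)
      have h2 := le_abs_self (τ * (F lo - deriv h lo))
      rw [habs_mul_τ] at h2
      linarith
    have h3 : τ * deriv h L₀ ≤ ε * MA := by
      have h4 := le_abs_self (τ * deriv h L₀)
      rw [habs_mul_τ] at h4
      linarith
    have h5 : G lo = τ * deriv h L₀ - τ * (deriv h L₀ - deriv h lo) + τ * (F lo - deriv h lo) := by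
      rw [hGdef]; ring
    rw [h5]
    rw [hmKε] at hmono_lo
    linarith
  -- continuity of G on the window
  have hcontG : ContinuousOn G (Icc lo hi) := by
    apply ContinuousOn.mul continuousOn_const
    apply ContinuousOn.add
    · exact fun L hL =>
        (hch.continuousAt (oth.mem_nhds (key L (hwin L hL)).1.1.1.1.1.1)).continuousWithinAt
    · apply ContinuousOn.mul
      · apply ContinuousOn.mul continuousOn_const
        exact fun L hL =>
          (hcA.continuousAt (otA.mem_nhds (key L (hwin L hL)).1.1.1.1.1.2)).continuousWithinAt
      · apply ContinuousOn.mul continuousOn_const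
        apply Real.continuous_sqrt.comp_continuousOn
        apply ContinuousOn.sub continuousOn_const
        apply ContinuousOn.pow
        apply ContinuousOn.mul continuousOn_const
        exact fun L hL =>
          ((hdg L (key L (hwin L hL)).1.1.1.1.2).continuousAt).continuousWithinAt
  -- intermediate value theorem
  have hzero : (0:ℝ) ∈ Icc (G lo) (G hi) := ⟨by linarith, by linarith⟩
  obtain ⟨Ld, hLdmem, hGLd⟩ := intermediate_value_Icc hlohi hcontG hzero
  have hτ0 : τ ≠ 0 := by rw [hτdef]; split <;> norm_num
  have hFLd : F Ld = 0 := by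
    rcases mul_eq_zero.1 hGLd with h1 | h1
    · exact absurd h1 hτ0
    · exact h1
  -- construct σd
  have hLdball : |Ld - Lsec| ≤ r₀ := hwin Ld hLdmem
  have hALd : 0 < A Ld := by
    have := (key Ld hLdball).1.1.2
    linarith
  have hsl : |s Ld| ≤ 1 := le_trans (hs_bd Ld hLdmem) (by linarith)
  have hsl' := abs_le.1 hsl
  have hsinθ : Real.sin (Real.arcsin (s Ld)) = s Ld := Real.sin_arcsin hsl'.1 hsl'.2
  have hcosθ : Real.cos (Real.arcsin (s Ld)) = Real.sqrt (1 - s Ld ^ 2) :=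
    Real.cos_arcsin (s Ld)
  have hFLd' : deriv h Ld + ε * deriv A Ld * (c * Real.sqrt (1 - s Ld ^ 2)) = 0 := by
    rw [hFdef] at hFLd; exact hFLd
  have hsecond : ε * A Ld * s Ld - η * D Ld = 0 := by
    rw [hs_eq Ld]
    field_simp
    ring
  rcases hc with hc1 | hc1
  · refine ⟨φ + Real.arcsin (s Ld), Ld, ?_, ?_⟩
    · have hσ : φ + Real.arcsin (s Ld) - φ = Real.arcsin (s Ld) := by ring
      rw [hσ, hcosθ]
      rw [hc1, one_mul] at hFLd'
      exact hFLd'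
    · have hσ : φ + Real.arcsin (s Ld) - φ = Real.arcsin (s Ld) := by ring
      rw [hσ, hsinθ]
      exact hsecond
  · refine ⟨φ + (Real.pi - Real.arcsin (s Ld)), Ld, ?_, ?_⟩
    · have hσ : φ + (Real.pi - Real.arcsin (s Ld)) - φ = Real.pi - Real.arcsin (s Ld) := by ring
      rw [hσ, Real.cos_pi_sub, hcosθ]
      rw [hc1] at hFLd'
      have : ε * deriv A Ld * -Real.sqrt (1 - s Ld ^ 2)
          = ε * deriv A Ld * (-1 * Real.sqrt (1 - s Ld ^ 2)) := by ring
      rw [this]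
      exact hFLd'
    · have hσ : φ + (Real.pi - Real.arcsin (s Ld)) - φ = Real.pi - Real.arcsin (s Ld) := by ring
      rw [hσ, Real.sin_pi_sub, hsinθ]
      exact hsecond
end

section
/- Let h, A, D : ℝ → ℝ be twice continuously differentiable on a neighborhood of L^sec ∈ ℝ with h'(L^sec) = 0, h''(L^sec) < 0, A(L^sec) > 0 and D'(L^sec) < 0, and let σ₀, φ ∈ ℝ satisfy cos(σ₀ − φ) = 1 (so that the corresponding equilibrium of the conservative toy model is a center). Then there exist ε₀ > 0 and c > 0 such that for every ε ∈ (0, ε₀) and every η ∈ (0, c ε), the dissipative toy model dσ/dt = h'(L) + ε A'(L) cos(σ − φ), dL/dt = ε A(L) sin(σ − φ) − η D(L) has an equilibrium point (σ_d, L_d) near (σ₀, L^sec) at which the Jacobian matrix J_D of the vector field satisfies trace(J_D) > 0, det(J_D) > 0 and (trace(J_D))²/4 − det(J_D) < 0; consequently the eigenvalues of J_D form a pair of non-real complex conjugates with strictly positive real part, i.e. the equilibrium is an unstable spiral. -/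
set_option maxHeartbeats 2000000
open Real Set Matrix Filter Topology

lemma aux_C2 (f : ℝ → ℝ) (x : ℝ) (hf : ContDiffAt ℝ 2 f x) :
    ∃ U : Set ℝ, IsOpen U ∧ x ∈ U ∧ (∀ y ∈ U, DifferentiableAt ℝ f y) ∧
      (∀ y ∈ U, DifferentiableAt ℝ (deriv f) y) ∧ ContinuousOn (deriv (deriv f)) U := by
  obtain ⟨u, hu, hcd⟩ := hf.contDiffOn le_rfl (by simp)
  obtain ⟨t, htu, ht, hxt⟩ := mem_nhds_iff.mp hu
  have hcd' : ContDiffOn ℝ 2 f t := hcd.mono htu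
  rw [show (2 : WithTop ℕ∞) = 1 + 1 from rfl, contDiffOn_succ_iff_deriv_of_isOpen ht] at hcd'
  obtain ⟨hd1, -, hcd1⟩ := hcd'
  rw [show (1 : WithTop ℕ∞) = 0 + 1 from rfl, contDiffOn_succ_iff_deriv_of_isOpen ht] at hcd1
  obtain ⟨hd2, -, hcd0⟩ := hcd1
  exact ⟨t, ht, hxt, fun y hy => (hd1 y hy).differentiableAt (ht.mem_nhds hy),
    fun y hy => (hd2 y hy).differentiableAt (ht.mem_nhds hy), hcd0.continuousOn⟩

lemma aux_cont_bound {g : ℝ → ℝ} {x δ : ℝ} (hg : ContinuousAt g x) (hδ : 0 < δ) :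
    ∀ᶠ y in 𝓝 x, |g y - g x| ≤ δ := by
  filter_upwards [hg (Metric.closedBall_mem_nhds (g x) hδ)] with y hy
  simpa [Real.dist_eq] using hy

lemma aux_abs_arcsin_le {u : ℝ} (hu : |u| ≤ 1/2) : |arcsin u| ≤ 2 * |u| := by
  have key : ∀ v : ℝ, 0 ≤ v → v ≤ 1/2 → arcsin v ≤ 2 * v := by
    intro v hv0 hv
    rcases eq_or_lt_of_le hv0 with rfl | hv0'
    · simp
    have h2v1 : 2 * v ≤ 1 := by linarith
    have hsin : v ≤ Real.sin (2 * v) := by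
      have := Real.sin_gt_sub_cube (x := 2 * v) (by linarith)
      nlinarith [sq_nonneg v, sq_nonneg (1 - 2*v)]
    calc arcsin v ≤ arcsin (Real.sin (2 * v)) := Real.monotone_arcsin hsin
      _ = 2 * v := Real.arcsin_sin (by nlinarith [Real.pi_gt_three]) (by nlinarith [Real.pi_gt_three])
  rcases le_or_gt 0 u with hu0 | hu0
  · rw [abs_of_nonneg hu0] at hu ⊢
    rw [abs_of_nonneg (Real.arcsin_nonneg.2 hu0)]
    exact key u hu0 hu
  · rw [abs_of_neg hu0] at hu ⊢
    rw [abs_of_nonpos (Real.arcsin_nonpos.2 hu0.le), ← Real.arcsin_neg]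
    exact key (-u) (by linarith) hu

lemma aux_spectrum (M : Matrix (Fin 2) (Fin 2) ℂ) (x y : ℝ)
    (htr : M 0 0 + M 1 1 = 2 * (x:ℂ))
    (hdet : M 0 0 * M 1 1 - M 0 1 * M 1 0 = (x:ℂ)^2 + (y:ℂ)^2) :
    spectrum ℂ M = {(x:ℂ) + y * Complex.I, (x:ℂ) - y * Complex.I} := by
  ext z
  rw [spectrum.mem_iff, Matrix.isUnit_iff_isUnit_det, isUnit_iff_ne_zero, not_ne_iff]
  have hdet2 : (algebraMap ℂ (Matrix (Fin 2) (Fin 2) ℂ) z - M).det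
      = (z - ((x:ℂ) + y * Complex.I)) * (z - ((x:ℂ) - y * Complex.I)) := by
    rw [Matrix.det_fin_two]
    simp only [Matrix.sub_apply, Matrix.algebraMap_matrix_apply, if_pos rfl]
    norm_num
    linear_combination (-z) * htr + hdet + (y:ℂ)^2 * Complex.I_sq
  rw [hdet2, mul_eq_zero, sub_eq_zero, sub_eq_zero]
  simp [Set.mem_insert_iff]

/-- Spiral case of the paper's Theorem 2: a center of the conservative toy
model (`cos (σ₀ - φ) = 1`, `h''(Lsec) < 0`, `A(Lsec) > 0`) becomes, for
`0 < η < c ε` with `ε` small and `D'(Lsec) < 0`, an equilibrium `(σ_d, L_d)`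
of the dissipative toy model near `(σ₀, Lsec)` at which the Jacobian `J_D`
has `trace J_D > 0`, `det J_D > 0` and `(trace J_D)²/4 - det J_D < 0`, so its
eigenvalues are non-real complex conjugates with positive real part: an
unstable spiral. -/
theorem dissipative_center_becomes_unstable_spiral
    (h A D : ℝ → ℝ) (Lsec σ₀ φ : ℝ)
    (hh : ContDiffAt ℝ 2 h Lsec) (hA : ContDiffAt ℝ 2 A Lsec)
    (hD : ContDiffAt ℝ 2 D Lsec)
    (hcrit : deriv h Lsec = 0) (hconc : deriv (deriv h) Lsec < 0)
    (hApos : 0 < A Lsec) (hDdec : deriv D Lsec < 0)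
    (hcos : Real.cos (σ₀ - φ) = 1) :
    ∃ ε₀ > (0:ℝ), ∃ c > (0:ℝ), ∃ C > (0:ℝ),
      ∀ ε : ℝ, 0 < ε → ε < ε₀ → ∀ η : ℝ, 0 < η → η < c * ε →
        ∃ σd Ld : ℝ,
          deriv h Ld + ε * deriv A Ld * Real.cos (σd - φ) = 0 ∧
          ε * A Ld * Real.sin (σd - φ) - η * D Ld = 0 ∧
          |Ld - Lsec| ≤ C * ε ∧ |σd - σ₀| ≤ C * η / ε ∧
          ∀ JD : Matrix (Fin 2) (Fin 2) ℝ,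
            JD = !![deriv (fun σ => deriv h Ld + ε * deriv A Ld * Real.cos (σ - φ)) σd,
                    deriv (fun L => deriv h L + ε * deriv A L * Real.cos (σd - φ)) Ld;
                    deriv (fun σ => ε * A Ld * Real.sin (σ - φ) - η * D Ld) σd,
                    deriv (fun L => ε * A L * Real.sin (σd - φ) - η * D L) Ld] →
            0 < JD.trace ∧ 0 < JD.det ∧ JD.trace ^ 2 / 4 - JD.det < 0 ∧
            ∃ x y : ℝ, 0 < x ∧ y ≠ 0 ∧
              spectrum ℂ (JD.map Complex.ofReal) =
                {(x : ℂ) + (y : ℂ) * Complex.I, (x : ℂ) - (y : ℂ) * Complex.I} := by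
  obtain ⟨Uh, hUhO, hUhm, hUhd1, hUhd2, hUhc⟩ := aux_C2 h Lsec hh
  obtain ⟨UA, hUAO, hUAm, hUAd1, hUAd2, hUAc⟩ := aux_C2 A Lsec hA
  obtain ⟨UD, hUDO, hUDm, hUDd1, hUDd2, hUDc⟩ := aux_C2 D Lsec hD
  set b : ℝ := -(deriv (deriv h) Lsec) with hb
  have hbpos : 0 < b := by simp only [hb]; linarith
  set a : ℝ := A Lsec with ha
  have hapos : 0 < a := hApos
  set MA' : ℝ := |deriv A Lsec| + 1 with hMA'
  set MA'' : ℝ := |deriv (deriv A) Lsec| + 1 with hMA''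
  set MD : ℝ := |D Lsec| + 1 with hMD
  set MD' : ℝ := |deriv D Lsec| + 1 with hMD'
  set dd : ℝ := deriv D Lsec with hdd
  have hMA'pos : (1:ℝ) ≤ MA' := by simp only [hMA']; linarith [abs_nonneg (deriv A Lsec)]
  have hMA''pos : (1:ℝ) ≤ MA'' := by simp only [hMA'']; linarith [abs_nonneg (deriv (deriv A) Lsec)]
  have hMDpos : (1:ℝ) ≤ MD := by simp only [hMD]; linarith [abs_nonneg (D Lsec)]
  have hMD'pos : (1:ℝ) ≤ MD' := by simp only [hMD']; linarith [abs_nonneg (deriv D Lsec)]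
  have hddneg : dd < 0 := hDdec
  -- continuity facts at Lsec
  have hch'' : ContinuousAt (deriv (deriv h)) Lsec := hUhc.continuousAt (hUhO.mem_nhds hUhm)
  have hcA : ContinuousAt A Lsec := (hUAd1 _ hUAm).continuousAt
  have hcA' : ContinuousAt (deriv A) Lsec := (hUAd2 _ hUAm).continuousAt
  have hcA'' : ContinuousAt (deriv (deriv A)) Lsec := hUAc.continuousAt (hUAO.mem_nhds hUAm)
  have hcD : ContinuousAt D Lsec := (hUDd1 _ hUDm).continuousAt
  have hcD' : ContinuousAt (deriv D) Lsec := (hUDd2 _ hUDm).continuousAt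
  -- little-o estimate for deriv h near Lsec
  have hder2 : HasDerivAt (deriv h) (-b) Lsec := by
    simpa [hb] using (hUhd2 _ hUhm).hasDerivAt
  have hlo2 : ∀ᶠ y in 𝓝 Lsec, |deriv h y + b * (y - Lsec)| ≤ b/4 * |y - Lsec| := by
    have hlo := Asymptotics.isLittleO_iff.mp (hasDerivAt_iff_isLittleO.mp hder2)
      (show (0:ℝ) < b/4 by linarith)
    filter_upwards [hlo] with y hy
    rw [hcrit] at hy
    have h1 : deriv h y - 0 - (y - Lsec) • (-b) = deriv h y + b * (y - Lsec) := by
      simp [smul_eq_mul]; ring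
    rw [h1] at hy
    simpa [Real.norm_eq_abs] using hy
  -- Combine all conditions into one ball
  have hev : ∀ᶠ y in 𝓝 Lsec,
      (y ∈ Uh ∧ y ∈ UA ∧ y ∈ UD) ∧
      |deriv (deriv h) y + b| ≤ b/2 ∧
      |A y - a| ≤ a/2 ∧
      |deriv A y| ≤ MA' ∧ |deriv (deriv A) y| ≤ MA'' ∧
      |D y| ≤ MD ∧ (deriv D y ≤ dd/2 ∧ |deriv D y| ≤ MD') ∧
      |deriv h y + b * (y - Lsec)| ≤ b/4 * |y - Lsec| := by
    filter_upwards [hUhO.mem_nhds hUhm, hUAO.mem_nhds hUAm, hUDO.mem_nhds hUDm,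
      aux_cont_bound hch'' (half_pos hbpos), aux_cont_bound hcA (half_pos hapos),
      aux_cont_bound hcA' one_pos, aux_cont_bound hcA'' one_pos,
      aux_cont_bound hcD one_pos,
      aux_cont_bound hcD' (show (0:ℝ) < min (-dd/2) 1 by
        apply lt_min_iff.2; constructor <;> [linarith; norm_num]), hlo2] with
      y p1 p2 p3 p4 p5 p6 p7 p8 p9 p10
    refine ⟨⟨p1, p2, p3⟩, ?_, p5, ?_, ?_, ?_, ⟨?_, ?_⟩, p10⟩
    · have : deriv (deriv h) Lsec = -b := by simp [hb]
      rw [this] at p4; convert p4 using 2; ring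
    · calc |deriv A y| ≤ |deriv A y - deriv A Lsec| + |deriv A Lsec| := by
            have := abs_sub_abs_le_abs_sub (deriv A y) (deriv A Lsec); linarith [abs_nonneg (deriv A y - deriv A Lsec)]
        _ ≤ MA' := by simp only [hMA']; linarith
    · calc |deriv (deriv A) y| ≤ |deriv (deriv A) y - deriv (deriv A) Lsec| + |deriv (deriv A) Lsec| := by
            have := abs_sub_abs_le_abs_sub (deriv (deriv A) y) (deriv (deriv A) Lsec); linarith [abs_nonneg (deriv (deriv A) y - deriv (deriv A) Lsec)]
        _ ≤ MA'' := by simp only [hMA'']; linarith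
    · calc |D y| ≤ |D y - D Lsec| + |D Lsec| := by
            have := abs_sub_abs_le_abs_sub (D y) (D Lsec); linarith [abs_nonneg (D y - D Lsec)]
        _ ≤ MD := by simp only [hMD]; linarith
    · have h1 : deriv D y - dd ≤ min (-dd/2) 1 := (abs_le.1 p9).2
      have h2 : min (-dd/2) 1 ≤ -dd/2 := min_le_left _ _
      linarith
    · have h1 := (abs_le.1 p9).1
      have h2 := (abs_le.1 p9).2
      have h3 : min (-dd/2) 1 ≤ 1 := min_le_right _ _
      rw [abs_le]
      constructor
      · have : -(|dd|) ≤ dd := neg_abs_le dd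
        simp only [hMD', ← hdd]
        nlinarith [abs_nonneg dd]
      · have : dd ≤ |dd| := le_abs_self dd
        simp only [hMD', ← hdd]
        nlinarith
  rw [Metric.eventually_nhds_iff] at hev
  obtain ⟨r, hrpos, hball⟩ := hev
  clear_value b a MA' MA'' MD MD' dd
  clear hb ha hMA' hMA'' hMD hMD' hdd hder2 hlo2 hch'' hcA hcA' hcA'' hcD hcD'
  clear hUhc hUAc hUDc hconc hApos hDdec hcrit hh hA hD
  -- constants
  set K : ℝ := (2*MA' + 2)/b with hK
  have hKpos : 0 < K := div_pos (by linarith) hbpos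
  have hbK : b * K = 2*MA' + 2 := by rw [hK]; field_simp
  set M₁ : ℝ := 2*MA'*MD/a with hM₁
  have hM₁pos : 0 < M₁ := div_pos (by nlinarith) hapos
  have hM₁eq : M₁ * a = 2*MA'*MD := by rw [hM₁]; field_simp
  set M₂ : ℝ := M₁^2 + M₁*MD' + 2*a*MA'' + 1 with hM₂
  have hM₂pos : 0 < M₂ := by nlinarith [sq_nonneg M₁]
  clear_value K M₁ M₂
  clear hK hM₁
  have habpos : (0:ℝ) < a*b/16 := by nlinarith
  refine ⟨min (r/(K+1)) (min ((a*b/16)/M₂) ((a*b/16)/(MD'^2/4 + 1))),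
    lt_min (div_pos hrpos (by linarith))
      (lt_min (div_pos habpos hM₂pos) (div_pos habpos (by nlinarith))),
    min 1 (a/(4*MD)), lt_min one_pos (div_pos hapos (by linarith)),
    K + 4*MD/a + 1, by nlinarith [div_pos (show (0:ℝ) < 4*MD by linarith) hapos], ?_⟩
  intro ε hε hε0 η hη hηc
  have hηε : η < ε := by
    have h1 : min 1 (a/(4*MD)) * ε ≤ 1 * ε :=
      mul_le_mul_of_nonneg_right (min_le_left _ _) hε.le
    linarith
  have hηa : η * (4*MD) < a * ε := by
    have h1 : min 1 (a/(4*MD)) * ε ≤ (a/(4*MD)) * ε :=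
      mul_le_mul_of_nonneg_right (min_le_right _ _) hε.le
    have h2 : η < (a/(4*MD)) * ε := lt_of_lt_of_le hηc h1
    have h3 : (0:ℝ) < 4*MD := by linarith
    calc η * (4*MD) < ((a/(4*MD)) * ε) * (4*MD) := mul_lt_mul_of_pos_right h2 h3
      _ = a * ε := by field_simp
  have hεM₂ : ε * M₂ ≤ a*b/16 := by
    have h1 : ε < (a*b/16)/M₂ := lt_of_lt_of_le hε0
      (le_trans (min_le_right _ _) (min_le_left _ _))
    calc ε * M₂ ≤ ((a*b/16)/M₂) * M₂ := mul_le_mul_of_nonneg_right h1.le hM₂pos.le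
      _ = a*b/16 := div_mul_cancel₀ _ (ne_of_gt hM₂pos)
  have hεMD' : ε * (MD'^2/4 + 1) < a*b/16 := by
    have h2 : (0:ℝ) < MD'^2/4 + 1 := by nlinarith
    have h1 : ε < (a*b/16)/(MD'^2/4 + 1) := lt_of_lt_of_le hε0
      (le_trans (min_le_right _ _) (min_le_right _ _))
    calc ε * (MD'^2/4 + 1) < ((a*b/16)/(MD'^2/4 + 1)) * (MD'^2/4 + 1) :=
          mul_lt_mul_of_pos_right h1 h2
      _ = a*b/16 := div_mul_cancel₀ _ (ne_of_gt h2)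
  have hKεr : K * ε < r := by
    have hεr : ε < r/(K+1) := lt_of_lt_of_le hε0 (min_le_left _ _)
    have := (lt_div_iff₀ (show (0:ℝ) < K+1 by linarith)).mp hεr
    nlinarith
  have hKεnn : 0 ≤ K * ε := mul_nonneg hKpos.le hε.le
  -- accessor
  have hP : ∀ L : ℝ, |L - Lsec| ≤ K * ε →
      (L ∈ Uh ∧ L ∈ UA ∧ L ∈ UD) ∧
      |deriv (deriv h) L + b| ≤ b/2 ∧
      |A L - a| ≤ a/2 ∧
      |deriv A L| ≤ MA' ∧ |deriv (deriv A) L| ≤ MA'' ∧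
      |D L| ≤ MD ∧ (deriv D L ≤ dd/2 ∧ |deriv D L| ≤ MD') ∧
      |deriv h L + b * (L - Lsec)| ≤ b/4 * |L - Lsec| := fun L hL =>
    hball (by rw [Real.dist_eq]; linarith)
  clear hball
  have hA2 : ∀ L : ℝ, |L - Lsec| ≤ K * ε → a/2 ≤ A L ∧ A L ≤ 3*a/2 := by
    intro L hL
    have := (hP L hL).2.2.1
    exact ⟨by linarith [(abs_le.1 this).1], by linarith [(abs_le.1 this).2]⟩
  have hApos' : ∀ L : ℝ, |L - Lsec| ≤ K * ε → 0 < ε * A L := by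
    intro L hL
    have := (hA2 L hL).1
    nlinarith
  -- the angle variable and reduced scalar equation
  set u : ℝ → ℝ := fun L => η * D L / (ε * A L) with hu
  have hubound : ∀ L : ℝ, |L - Lsec| ≤ K * ε →
      |u L| ≤ 2*MD*η/(a*ε) ∧ |u L| ≤ 1/2 := by
    intro L hL
    have hD1 : |D L| ≤ MD := (hP L hL).2.2.2.2.2.1
    have hA1 := (hA2 L hL).1
    have hεA := hApos' L hL
    have habs : |u L| = η * |D L| / (ε * A L) := by
      simp only [hu]
      rw [abs_div, abs_mul, abs_of_pos hη, abs_of_pos hεA]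
    have h1 : |u L| ≤ 2*MD*η/(a*ε) := by
      rw [habs, div_le_div_iff₀ hεA (by nlinarith)]
      have t1 : η * |D L| ≤ η * MD := mul_le_mul_of_nonneg_left hD1 hη.le
      have t2 : a ≤ 2 * A L := by linarith
      nlinarith [t1, t2, mul_nonneg hapos.le hε.le,
        mul_nonneg (mul_nonneg hη.le (show (0:ℝ) ≤ MD by linarith)) hε.le]
    refine ⟨h1, le_trans h1 ?_⟩
    rw [div_le_iff₀ (by nlinarith)]
    nlinarith
  set f : ℝ → ℝ := fun L => deriv h L + ε * deriv A L * Real.sqrt (1 - (u L)^2) with hf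
  have hsqrt01 : ∀ L : ℝ, |L - Lsec| ≤ K * ε →
      Real.sqrt (1 - (u L)^2) ≤ 1 ∧ 1/2 ≤ Real.sqrt (1 - (u L)^2) := by
    intro L hL
    have h2 := (hubound L hL).2
    have hsq : (u L)^2 ≤ 1/4 := by nlinarith [abs_nonneg (u L), sq_abs (u L)]
    constructor
    · exact Real.sqrt_le_one.2 (by nlinarith [sq_nonneg (u L)])
    · rw [show (1:ℝ)/2 = Real.sqrt (1/4) by
        rw [show (1:ℝ)/4 = (1/2)^2 by norm_num, Real.sqrt_sq]; norm_num]
      exact Real.sqrt_le_sqrt (by linarith)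
  have hmemIcc : ∀ L ∈ Icc (Lsec - K*ε) (Lsec + K*ε), |L - Lsec| ≤ K * ε := by
    intro L hL
    rw [abs_le]
    exact ⟨by linarith [hL.1], by linarith [hL.2]⟩
  have hfc : ContinuousOn f (Icc (Lsec - K*ε) (Lsec + K*ε)) := by
    intro L hL
    have hL' := hmemIcc L hL
    have hmem := (hP L hL').1
    have c1 : ContinuousAt (deriv h) L := (hUhd2 L hmem.1).continuousAt
    have c2 : ContinuousAt (deriv A) L := (hUAd2 L hmem.2.1).continuousAt
    have c3 : ContinuousAt A L := (hUAd1 L hmem.2.1).continuousAt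
    have c4 : ContinuousAt D L := (hUDd1 L hmem.2.2).continuousAt
    have c5 : ContinuousAt u L := by
      simp only [hu]
      exact (continuousAt_const.mul c4).div (continuousAt_const.mul c3)
        (ne_of_gt (hApos' L hL'))
    have c6 : ContinuousAt (fun L => Real.sqrt (1 - (u L)^2)) L :=
      Real.continuous_sqrt.continuousAt.comp (continuousAt_const.sub (c5.pow 2))
    exact (c1.add ((continuousAt_const.mul c2).mul c6)).continuousWithinAt
  -- endpoint signs
  have hend : ∀ s : ℝ, s = 1 ∨ s = -1 → (0:ℝ) < s * f (Lsec - s * (K*ε)) := by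
    intro s hs
    have hs1 : |s| = 1 := by rcases hs with rfl | rfl <;> norm_num
    have hsub : Lsec - s*(K*ε) - Lsec = -(s*(K*ε)) := by ring
    have hKε : |Lsec - s*(K*ε) - Lsec| = K*ε := by
      rw [hsub, abs_neg, abs_mul, hs1, one_mul, abs_of_nonneg hKεnn]
    have habs : |Lsec - s*(K*ε) - Lsec| ≤ K * ε := le_of_eq hKε
    have hder := (hP _ habs).2.2.2.2.2.2.2
    have hA' := (hP _ habs).2.2.2.1
    rw [hKε, hsub] at hder
    have hsq := hsqrt01 _ habs
    simp only [hf]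
    set S := Real.sqrt (1 - (u (Lsec - s*(K*ε)))^2) with hS
    have hSabs : |S| ≤ 1 := abs_le.2 ⟨by linarith [hsq.2], hsq.1⟩
    have hterm : |ε * deriv A (Lsec - s*(K*ε)) * S| ≤ ε * MA' := by
      rw [abs_mul, abs_mul, abs_of_pos hε]
      have t1 : |deriv A (Lsec - s*(K*ε))| * |S| ≤ MA' * 1 :=
        mul_le_mul hA' hSabs (abs_nonneg S) (by linarith)
      nlinarith [t1]
    have hd1 := (abs_le.1 hder).1
    have hd2 := (abs_le.1 hder).2
    have ht1 := (abs_le.1 hterm).1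
    have ht2 := (abs_le.1 hterm).2
    have hq : b*(K*ε) = (2*MA'+2)*ε := by rw [← mul_assoc, hbK]
    have hMA'ε : 0 ≤ MA' * ε := mul_nonneg (by linarith) hε.le
    rcases hs with rfl | rfl
    · linarith [hd1, ht1, hq, hMA'ε, hε]
    · linarith [hd2, ht2, hq, hMA'ε, hε]
  have hfL1 : 0 < f (Lsec - K*ε) := by
    have := hend 1 (Or.inl rfl); simpa using this
  have hfL2 : f (Lsec + K*ε) < 0 := by
    have := hend (-1) (Or.inr rfl)
    have h2 : Lsec - (-1) * (K*ε) = Lsec + K*ε := by ring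
    rw [h2] at this; linarith
  -- IVT
  have h12 : Lsec - K*ε ≤ Lsec + K*ε := by linarith
  obtain ⟨Ld, hLdmem, hfLd⟩ := intermediate_value_Icc' h12 hfc
    (⟨hfL2.le, hfL1.le⟩ : (0:ℝ) ∈ Icc (f (Lsec + K*ε)) (f (Lsec - K*ε)))
  have hLdKε : |Ld - Lsec| ≤ K * ε := hmemIcc Ld hLdmem
  -- the equilibrium
  obtain ⟨n, hn⟩ := (Real.cos_eq_one_iff _).mp hcos
  set u₀ : ℝ := u Ld with hu₀
  have hu₀2 : |u₀| ≤ 1/2 := (hubound Ld hLdKε).2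
  have hu₀b : |u₀| ≤ 2*MD*η/(a*ε) := (hubound Ld hLdKε).1
  have hu₀1 : -1 ≤ u₀ ∧ u₀ ≤ 1 := by
    constructor <;> [linarith [(abs_le.1 hu₀2).1]; linarith [(abs_le.1 hu₀2).2]]
  refine ⟨σ₀ + arcsin u₀, Ld, ?_, ?_, ?_, ?_, ?_⟩
  case _ =>
    -- first equilibrium equation
    have hσφ : σ₀ + arcsin u₀ - φ = arcsin u₀ + (n:ℝ) * (2*π) := by linarith
    rw [hσφ, Real.cos_add_int_mul_two_pi, Real.cos_arcsin]
    simpa [hf, hu₀] using hfLd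
  case _ =>
    have hσφ : σ₀ + arcsin u₀ - φ = arcsin u₀ + (n:ℝ) * (2*π) := by linarith
    rw [hσφ, Real.sin_add_int_mul_two_pi, Real.sin_arcsin hu₀1.1 hu₀1.2]
    have hεA := hApos' Ld hLdKε
    simp only [hu₀, hu]
    field_simp
    have hA0 : A Ld ≠ 0 := fun h0 => by simp [h0] at hεA
    simp [hA0]
  case _ =>
    have hC : K * ε ≤ (K + 4*MD/a + 1) * ε := by
      have : 0 ≤ (4*MD/a + 1) * ε :=
        mul_nonneg (by positivity) hε.le
      nlinarith
    linarith [hLdKε]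
  case _ =>
    have harc : |σ₀ + arcsin u₀ - σ₀| = |arcsin u₀| := by rw [show σ₀ + arcsin u₀ - σ₀ = arcsin u₀ by ring]
    rw [harc]
    have h1 : |arcsin u₀| ≤ 2 * |u₀| := aux_abs_arcsin_le hu₀2
    have h2 : 2 * |u₀| ≤ 2 * (2*MD*η/(a*ε)) := by linarith
    have h3 : 2 * (2*MD*η/(a*ε)) ≤ (K + 4*MD/a + 1) * η / ε := by
      have e : 2 * (2*MD*η/(a*ε)) = (4*MD/a) * η / ε := by
        field_simp
        ring
      rw [e, div_le_div_iff₀ hε hε]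
      nlinarith [mul_nonneg (mul_nonneg hKpos.le hη.le) hε.le, mul_nonneg hη.le hε.le]
    linarith
  case _ =>
    intro JD hJD
    have hPL := hP Ld hLdKε
    have hmem := hPL.1
    have hh'' := hPL.2.1
    have hA'b := hPL.2.2.2.1
    have hA''b := hPL.2.2.2.2.1
    have hDb := hPL.2.2.2.2.2.1
    have hD'1 := hPL.2.2.2.2.2.2.1.1
    have hD'2 := hPL.2.2.2.2.2.2.1.2
    have hAL := hA2 Ld hLdKε
    have hALpos : 0 < A Ld := lt_of_lt_of_le (by linarith) hAL.1
    have hσφ : σ₀ + arcsin u₀ - φ = arcsin u₀ + (n:ℝ) * (2*π) := by linarith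
    have hsin : Real.sin (σ₀ + arcsin u₀ - φ) = u₀ := by
      rw [hσφ, Real.sin_add_int_mul_two_pi, Real.sin_arcsin hu₀1.1 hu₀1.2]
    have hcosv : Real.cos (σ₀ + arcsin u₀ - φ) = Real.sqrt (1 - u₀^2) := by
      rw [hσφ, Real.cos_add_int_mul_two_pi, Real.cos_arcsin]
    -- derivatives
    have H1 : HasDerivAt (fun σ : ℝ => σ - φ) 1 (σ₀ + arcsin u₀) :=
      (hasDerivAt_id _).sub_const φ
    have Hcos : HasDerivAt (fun σ : ℝ => Real.cos (σ - φ))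
        (-Real.sin (σ₀ + arcsin u₀ - φ)) (σ₀ + arcsin u₀) := by
      simpa [Function.comp_def] using (Real.hasDerivAt_cos ((σ₀ + arcsin u₀) - φ)).comp (σ₀ + arcsin u₀) H1
    have Hsin : HasDerivAt (fun σ : ℝ => Real.sin (σ - φ))
        (Real.cos (σ₀ + arcsin u₀ - φ)) (σ₀ + arcsin u₀) := by
      simpa [Function.comp_def] using (Real.hasDerivAt_sin ((σ₀ + arcsin u₀) - φ)).comp (σ₀ + arcsin u₀) H1
    have Hh' : HasDerivAt (deriv h) (deriv (deriv h) Ld) Ld := (hUhd2 Ld hmem.1).hasDerivAt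
    have HA' : HasDerivAt (deriv A) (deriv (deriv A) Ld) Ld := (hUAd2 Ld hmem.2.1).hasDerivAt
    have HA : HasDerivAt A (deriv A Ld) Ld := (hUAd1 Ld hmem.2.1).hasDerivAt
    have HD : HasDerivAt D (deriv D Ld) Ld := (hUDd1 Ld hmem.2.2).hasDerivAt
    have Hd00 : deriv (fun σ => deriv h Ld + ε * deriv A Ld * Real.cos (σ - φ))
        (σ₀ + arcsin u₀) = ε * deriv A Ld * -Real.sin (σ₀ + arcsin u₀ - φ) :=
      ((Hcos.const_mul (ε * deriv A Ld)).const_add (deriv h Ld)).deriv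
    have Hd01 : deriv (fun L => deriv h L + ε * deriv A L * Real.cos (σ₀ + arcsin u₀ - φ)) Ld
        = deriv (deriv h) Ld + ε * deriv (deriv A) Ld * Real.cos (σ₀ + arcsin u₀ - φ) :=
      (Hh'.add ((HA'.const_mul ε).mul_const (Real.cos (σ₀ + arcsin u₀ - φ)))).deriv
    have Hd10 : deriv (fun σ => ε * A Ld * Real.sin (σ - φ) - η * D Ld) (σ₀ + arcsin u₀)
        = ε * A Ld * Real.cos (σ₀ + arcsin u₀ - φ) :=
      ((Hsin.const_mul (ε * A Ld)).sub_const (η * D Ld)).deriv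
    have Hd11 : deriv (fun L => ε * A L * Real.sin (σ₀ + arcsin u₀ - φ) - η * D L) Ld
        = ε * deriv A Ld * Real.sin (σ₀ + arcsin u₀ - φ) - η * deriv D Ld :=
      (((HA.const_mul ε).mul_const (Real.sin (σ₀ + arcsin u₀ - φ))).sub (HD.const_mul η)).deriv
    rw [Hd00, Hd01, Hd10, Hd11] at hJD
    subst hJD
    set sv : ℝ := Real.sin (σ₀ + arcsin u₀ - φ) with hsv
    set cv : ℝ := Real.cos (σ₀ + arcsin u₀ - φ) with hcv
    -- entry abbreviations
    set e00 : ℝ := ε * deriv A Ld * -sv with he00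
    set e01 : ℝ := deriv (deriv h) Ld + ε * deriv (deriv A) Ld * cv with he01
    set e10 : ℝ := ε * A Ld * cv with he10
    set e11 : ℝ := ε * deriv A Ld * sv - η * deriv D Ld with he11
    have htr : (!![e00, e01; e10, e11]).trace = e00 + e11 := Matrix.trace_fin_two_of _ _ _ _
    have hdet : (!![e00, e01; e10, e11]).det = e00 * e11 - e01 * e10 :=
      Matrix.det_fin_two_of _ _ _ _
    -- trace positivity
    have htr_eq : e00 + e11 = -(η * deriv D Ld) := by rw [he00, he11]; ring
    have htpos : 0 < -(η * deriv D Ld) := by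
      linarith only [mul_le_mul_of_nonneg_left hD'1 hη.le, mul_pos hη (neg_pos.2 hddneg)]
    -- bounds on cv
    have hsq01 := hsqrt01 Ld hLdKε
    rw [← hu₀] at hsq01
    have hcv1 : cv ≤ 1 := by rw [hcosv]; exact hsq01.1
    have hcv2 : 1/2 ≤ cv := by rw [hcosv]; exact hsq01.2
    -- bound on the off-diagonal small quantity Q = ε A' sv
    have hQeq : ε * deriv A Ld * sv = η * (deriv A Ld * D Ld / A Ld) := by
      rw [hsin, hu₀]
      simp only [hu]
      field_simp
    have hQb : |ε * deriv A Ld * sv| ≤ η * M₁ := by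
      rw [hQeq, abs_mul, abs_of_pos hη]
      apply mul_le_mul_of_nonneg_left _ hη.le
      rw [abs_div, abs_of_pos hALpos, div_le_iff₀ hALpos, abs_mul]
      have t1 : |deriv A Ld| * |D Ld| ≤ MA' * MD :=
        mul_le_mul hA'b hDb (abs_nonneg _) (by linarith)
      have t2 : M₁ * (a/2) ≤ M₁ * A Ld := mul_le_mul_of_nonneg_left hAL.1 hM₁pos.le
      linarith [t1, t2, hM₁eq]
    have hQ1 := abs_le.1 hQb
    have hQ2 : (ε * deriv A Ld * sv)^2 ≤ (η*M₁)^2 := by nlinarith only [hQ1.1, hQ1.2]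
    have hQ3 : |(ε * deriv A Ld * sv) * (η * deriv D Ld)| ≤ (η*M₁) * (η*MD') := by
      rw [abs_mul]
      refine mul_le_mul hQb ?_ (abs_nonneg _) (mul_nonneg hη.le hM₁pos.le)
      rw [abs_mul, abs_of_pos hη]
      exact mul_le_mul_of_nonneg_left hD'2 hη.le
    have hQ3' := abs_le.1 hQ3
    -- h'' bounds
    have hH := abs_le.1 hh''
    -- A * cv bounds
    have hAcv : a/4 ≤ A Ld * cv := by
      have t1 : (a/2)*cv ≤ A Ld * cv := mul_le_mul_of_nonneg_right hAL.1 (by linarith)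
      have t2 : (a/2)*(1/2) ≤ (a/2)*cv := mul_le_mul_of_nonneg_left hcv2 (by linarith)
      linarith
    have hAcv' : A Ld * cv ≤ 3*a/2 := by
      have t1 : A Ld * cv ≤ A Ld * 1 := mul_le_mul_of_nonneg_left hcv1 (by linarith)
      linarith
    -- main term
    have hT : ε*(a*b)/8 ≤ (-(deriv (deriv h) Ld)) * (ε * (A Ld * cv)) := by
      have p1 : ε*(a/4) ≤ ε*(A Ld*cv) := mul_le_mul_of_nonneg_left hAcv hε.le
      have p2 : (0:ℝ) ≤ ε*(a/4) := mul_nonneg hε.le (by linarith)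
      have p3 : (b/2)*(ε*(a/4)) ≤ (-(deriv (deriv h) Ld))*(ε*(A Ld*cv)) :=
        mul_le_mul (by linarith) p1 p2 (by linarith)
      linarith only [p3]
    -- fourth term
    have hW : |(ε * deriv (deriv A) Ld * cv) * (ε * (A Ld * cv))| ≤ (ε*MA'') * (ε*(3*a/2)) := by
      rw [abs_mul]
      refine mul_le_mul ?_ ?_ (abs_nonneg _) (mul_nonneg hε.le (by linarith))
      · rw [abs_mul, abs_mul, abs_of_pos hε]
        have hab : |deriv (deriv A) Ld| * |cv| ≤ MA'' * 1 :=
          mul_le_mul hA''b (by rw [abs_le]; constructor <;> linarith) (abs_nonneg _) (by linarith)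
        nlinarith only [hab, hε.le]
      · rw [abs_mul, abs_of_pos hε, abs_of_nonneg (by linarith only [hAcv, hapos] : (0:ℝ) ≤ A Ld * cv)]
        nlinarith only [hAcv', hε.le]
    have hW' := abs_le.1 hW
    -- determinant lower bound
    have hdet_eq : e00 * e11 - e01 * e10
        = -(ε * deriv A Ld * sv)^2 + (ε * deriv A Ld * sv) * (η * deriv D Ld)
          + (-(deriv (deriv h) Ld)) * (ε * (A Ld * cv))
          - (ε * deriv (deriv A) Ld * cv) * (ε * (A Ld * cv)) := by
      rw [he00, he01, he10, he11]; ring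
    have hη2 : η^2 ≤ ε^2 := by nlinarith only [hη, hηε]
    have hbridge : ε^2*M₂ = ε^2*M₁^2 + ε^2*(M₁*MD') + ε^2*(2*a*MA'') + ε^2 := by
      rw [hM₂]; ring
    have hεM₂ε : ε*(ε*M₂) ≤ ε*(a*b/16) := mul_le_mul_of_nonneg_left hεM₂ hε.le
    have hsmall1 : (η*M₁)^2 ≤ ε^2*M₁^2 := by nlinarith only [hη2, sq_nonneg M₁]
    have hsmall2 : (η*M₁)*(η*MD') ≤ ε^2*(M₁*MD') := by
      nlinarith only [hη2, mul_nonneg hM₁pos.le (show (0:ℝ) ≤ MD' by linarith)]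
    have hsmall3 : (ε*MA'')*(ε*(3*a/2)) ≤ ε^2*(2*a*MA'') := by
      nlinarith only [mul_nonneg (mul_nonneg hapos.le (show (0:ℝ) ≤ MA'' by linarith)) (sq_nonneg ε)]
    have hdetlow : ε*(a*b)/16 ≤ e00 * e11 - e01 * e10 := by
      rw [hdet_eq]
      linarith only [hQ2, hQ3'.1, hT, hW'.2, hsmall1, hsmall2, hsmall3, hbridge, hεM₂ε,
        sq_nonneg ε]
    have hdposϵ : 0 < ε*(a*b)/16 := by linarith only [mul_pos hε (mul_pos hapos hbpos)]
    -- trace squared bound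
    have htsq : (e00 + e11)^2/4 < ε*(a*b)/16 := by
      rw [htr_eq]
      have t0 : (deriv D Ld)^2 ≤ MD'^2 := by
        have g1 := neg_abs_le (deriv D Ld)
        have g2 := le_abs_self (deriv D Ld)
        nlinarith only [hD'2, g1, g2, abs_nonneg (deriv D Ld)]
      have t1 : (η * deriv D Ld)^2 ≤ η^2 * MD'^2 := by nlinarith only [t0, sq_nonneg η]
      have t2 : η^2 * MD'^2 ≤ ε^2 * MD'^2 := by nlinarith only [hη2, sq_nonneg MD']
      have t3 : ε*(ε*(MD'^2/4+1)) < ε*(a*b/16) := mul_lt_mul_of_pos_left hεMD' hε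
      linarith only [t1, t2, t3, sq_nonneg ε]
    refine ⟨?_, ?_, ?_, ?_⟩
    · rw [htr, htr_eq]; exact htpos
    · rw [hdet]; exact lt_of_lt_of_le hdposϵ hdetlow
    · rw [htr, hdet]; exact sub_neg.mpr (lt_of_lt_of_le htsq hdetlow)
    · -- spectrum
      set t : ℝ := e00 + e11 with ht
      set d : ℝ := e00 * e11 - e01 * e10 with hd
      have hdisc : 0 < d - t^2/4 := sub_pos.mpr (lt_of_lt_of_le htsq hdetlow)
      refine ⟨t/2, Real.sqrt (d - t^2/4), by rw [htr_eq]; linarith only [htpos], 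
        ne_of_gt (Real.sqrt_pos.2 hdisc), ?_⟩
      have hmap : (!![e00, e01; e10, e11]).map Complex.ofReal
          = !![(e00:ℂ), (e01:ℂ); (e10:ℂ), (e11:ℂ)] := by
        ext i j
        fin_cases i <;> fin_cases j <;> simp [Matrix.map_apply]
      rw [hmap]
      have hy2 : (Real.sqrt (d - t^2/4))^2 = d - t^2/4 := Real.sq_sqrt hdisc.le
      have hx : e00 + e11 = 2 * (t/2) := by rw [ht]; ring
      have hyd : e00 * e11 - e01 * e10 = (t/2)^2 + (Real.sqrt (d - t^2/4))^2 := by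
        rw [hy2, hd]; ring
      refine aux_spectrum _ (t/2) (Real.sqrt (d - t^2/4)) ?_ ?_
      · show (e00:ℂ) + (e11:ℂ) = _
        exact_mod_cast congrArg Complex.ofReal hx
      · show (e00:ℂ) * (e11:ℂ) - (e01:ℂ) * (e10:ℂ) = _
        exact_mod_cast congrArg Complex.ofReal hyd
end

section
/- Let h, A, D : ℝ → ℝ be twice continuously differentiable on a neighborhood of L^sec ∈ ℝ with h'(L^sec) = 0, h''(L^sec) < 0, A(L^sec) > 0 and D'(L^sec) < 0, and let σ₀, φ ∈ ℝ satisfy cos(σ₀ − φ) = −1 (so that the corresponding equilibrium of the conservative toy model is a saddle). Then there exist ε₀ > 0 and c > 0 such that for every ε ∈ (0, ε₀) and every η ∈ (0, c ε), the dissipative toy model dσ/dt = h'(L) + ε A'(L) cos(σ − φ), dL/dt = ε A(L) sin(σ − φ) − η D(L) has an equilibrium point (σ_d, L_d) near (σ₀, L^sec) at which the Jacobian matrix J_D of the vector field satisfies det(J_D) < 0; consequently J_D has two nonzero real eigenvalues of opposite sign, i.e. the equilibrium is a saddle. -/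
open Real Set Matrix

set_option maxHeartbeats 1000000

lemma toy_s_bound (ε η c M Amin AL DL : ℝ) (hε : 0 < ε) (hη : 0 < η)
    (hηc : η < c * ε) (hc2 : c ≤ Amin / (2*M)) (hM : 0 < M) (hAmin : 0 < Amin)
    (hAm : Amin < AL) (hDM : |DL| < M) : |η * DL / (ε * AL)| ≤ 1/2 := by
  have hALpos : 0 < AL := lt_trans hAmin hAm
  have hden : 0 < ε * AL := mul_pos hε hALpos
  have hM0 : M ≠ 0 := hM.ne'
  rw [abs_div, abs_of_pos hden, abs_mul, abs_of_pos hη, div_le_iff₀ hden]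
  have p1 : η * |DL| < η * M := mul_lt_mul_of_pos_left hDM hη
  have p2 : η * M < c * ε * M := mul_lt_mul_of_pos_right hηc hM
  have p3 : c * ε * M ≤ Amin / (2*M) * ε * M :=
    mul_le_mul_of_nonneg_right (mul_le_mul_of_nonneg_right hc2 hε.le) hM.le
  have p4 : Amin / (2*M) * ε * M = ε * Amin / 2 := by field_simp
  have p5 : ε * Amin ≤ ε * AL := mul_le_mul_of_nonneg_left hAm.le hε.le
  linarith

lemma toy_sigma_bound (K M Amin η ε : ℝ) (hK : 0 < K) (hM : 0 < M) (hAmin : 0 < Amin)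
    (hη : 0 < η) (hε : 0 < ε) :
    2 * (η * M / (ε * Amin)) ≤ (K + 4 * M / Amin + 1) * η / ε := by
  rw [show 2 * (η * M / (ε * Amin)) = 2*η*M / (ε*Amin) from by ring,
    div_le_div_iff₀ (mul_pos hε hAmin) hε]
  have hCA : 4*M/Amin*Amin = 4*M := div_mul_cancel₀ _ hAmin.ne'
  have h2 : 4*M/Amin*Amin*(η*ε) = 4*M*(η*ε) := by rw [hCA]
  nlinarith [h2, mul_pos hη hε, mul_pos (mul_pos hK hη) hε,
    mul_pos hAmin (mul_pos hη hε), mul_pos hM (mul_pos hη hε)]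

set_option maxHeartbeats 1000000 in
lemma toy_det_neg (ε η β Amin M a2 c2 d1 h2 AL sd q : ℝ)
    (hε : 0 < ε) (hη : 0 < η) (hηε : η < ε) (hβ : 0 < β) (hAmin : 0 < Amin) (hM1 : 1 ≤ M)
    (hh2 : h2 < -β) (hAm : Amin < AL) (hAM : |AL| < M)
    (ha2 : |a2| < M) (hc2 : |c2| < M) (hd1 : |d1| < M)
    (hsd : |sd| ≤ 1/2) (hq1 : q ≤ 1) (hqh : 1/2 ≤ q)
    (hε8 : 8 * M^2 * ε < β * Amin) :
    (ε * a2 * -sd) * (ε * a2 * sd - η * d1) - (h2 + ε * c2 * -q) * (ε * AL * -q) < 0 := by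
  have hq0 : 0 ≤ q := by linarith
  have hh2n : h2 < 0 := by linarith
  have hM0 : (0:ℝ) < M := by linarith
  -- A L * q is bounded below
  have hAq : Amin * (1/2) ≤ AL * q := by
    have p1 : Amin * (1/2) ≤ Amin * q := mul_le_mul_of_nonneg_left hqh hAmin.le
    have p2 : Amin * q ≤ AL * q := mul_le_mul_of_nonneg_right hAm.le hq0
    linarith
  have hT3 : (AL * q) * h2 ≤ (Amin * (1/2)) * (-β) := by nlinarith [hAq]
  -- |a2 * sd| bound
  have hT2 : (a2 * sd) * d1 ≤ M * M := by
    have h1 : |a2 * sd| ≤ M * (1/2) := by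
      rw [abs_mul]
      exact mul_le_mul ha2.le hsd (abs_nonneg sd) hM0.le
    have h2' : (a2 * sd) * d1 ≤ |a2 * sd| * |d1| := by
      calc (a2 * sd) * d1 ≤ |(a2 * sd) * d1| := le_abs_self _
        _ = |a2 * sd| * |d1| := abs_mul _ _
    have h3 : |a2 * sd| * |d1| ≤ (M * (1/2)) * M :=
      mul_le_mul h1 hd1.le (abs_nonneg d1) (by linarith)
    nlinarith
  have hq2 : q^2 ≤ 1 := by nlinarith
  have habsM : |c2 * AL| ≤ M * M := by
    rw [abs_mul]
    exact mul_le_mul hc2.le hAM.le (abs_nonneg AL) hM0.le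
  have hT4 : -(M*M) ≤ (c2 * AL) * q^2 := by
    have h1 : -|c2 * AL| * q^2 ≤ (c2 * AL) * q^2 :=
      mul_le_mul_of_nonneg_right (neg_abs_le _) (sq_nonneg q)
    have h2' : -(M*M) * q^2 ≤ -|c2 * AL| * q^2 :=
      mul_le_mul_of_nonneg_right (by linarith) (sq_nonneg q)
    nlinarith [sq_nonneg q]
  have f1 : ε * η * ((a2 * sd) * d1) ≤ ε * η * (M * M) :=
    mul_le_mul_of_nonneg_left hT2 (mul_pos hε hη).le
  have f2 : ε * ((AL * q) * h2) ≤ ε * ((Amin * (1/2)) * (-β)) :=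
    mul_le_mul_of_nonneg_left hT3 hε.le
  have f3 : ε * ε * (-(M*M)) ≤ ε * ε * ((c2 * AL) * q^2) :=
    mul_le_mul_of_nonneg_left hT4 (mul_pos hε hε).le
  have f4 : η * (ε * (M*M)) ≤ ε * (ε * (M*M)) :=
    mul_le_mul_of_nonneg_right hηε.le (by positivity)
  have f5 : ε * (8 * M^2 * ε) < ε * (β * Amin) := mul_lt_mul_of_pos_left hε8 hε
  nlinarith [sq_nonneg (ε * a2 * sd), f1, f2, f3, f4, f5]

lemma spectrum_saddle (M : Matrix (Fin 2) (Fin 2) ℝ) (hdet : M.det < 0) :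
    ∃ x y : ℝ, 0 < x ∧ y < 0 ∧ spectrum ℝ M = {x, y} := by
  set a := M 0 0; set b := M 0 1; set c := M 1 0; set d := M 1 1
  have hdet' : a * d - b * c < 0 := by rwa [Matrix.det_fin_two] at hdet
  set t := a + d with ht
  have hΔ : 0 < t ^ 2 - 4 * (a * d - b * c) := by nlinarith [sq_nonneg t]
  set Δ := t ^ 2 - 4 * (a * d - b * c) with hΔdef
  have hsq : Real.sqrt Δ ^ 2 = Δ := Real.sq_sqrt hΔ.le
  have habs : |t| < Real.sqrt Δ := by
    have h1 : |t| = Real.sqrt (t ^ 2) := (Real.sqrt_sq_eq_abs t).symm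
    rw [h1]
    exact Real.sqrt_lt_sqrt (sq_nonneg t) (by nlinarith)
  have key : ∀ z : ℝ, (z - (t + Real.sqrt Δ) / 2) * (z - (t - Real.sqrt Δ) / 2)
      = (z - a) * (z - d) - b * c := by
    intro z; linear_combination (-(1:ℝ)/4) * hsq
  refine ⟨(t + Real.sqrt Δ) / 2, (t - Real.sqrt Δ) / 2, by cases abs_lt.1 habs; linarith,
    by cases abs_lt.1 habs; linarith, ?_⟩
  ext z
  rw [spectrum.mem_iff, Matrix.isUnit_iff_isUnit_det, isUnit_iff_ne_zero, not_ne_iff]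
  have hdeteq : (algebraMap ℝ (Matrix (Fin 2) (Fin 2) ℝ) z - M).det
      = (z - a) * (z - d) - b * c := by
    rw [Matrix.det_fin_two]
    simp only [Matrix.sub_apply, Matrix.algebraMap_matrix_apply]
    norm_num
    rfl
  rw [hdeteq, ← key z, mul_eq_zero, sub_eq_zero, sub_eq_zero]
  simp [Set.mem_insert_iff]

lemma arcsin_le_two_mul {x : ℝ} (h0 : 0 ≤ x) (h1 : x ≤ 1/2) : Real.arcsin x ≤ 2 * x := by
  have hpi : π ≤ 4 := Real.pi_le_four
  have hpi3 : (3:ℝ) < π := Real.pi_gt_three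
  rw [Real.arcsin_le_iff_le_sin ⟨by linarith, by linarith⟩ ⟨by linarith, by linarith⟩]
  have hj := Real.mul_le_sin (x := 2*x) (by linarith) (by linarith)
  have hπpos := Real.pi_pos
  calc x ≤ 2/π * (2*x) := by
        rw [div_mul_eq_mul_div, le_div_iff₀ hπpos]; nlinarith
    _ ≤ Real.sin (2*x) := hj

lemma abs_arcsin_le_two_mul {x : ℝ} (hx : |x| ≤ 1/2) : |Real.arcsin x| ≤ 2 * |x| := by
  rcases le_total 0 x with hx0 | hx0
  · rw [abs_of_nonneg hx0] at *
    rw [abs_of_nonneg (Real.arcsin_nonneg.2 hx0)]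
    exact arcsin_le_two_mul hx0 hx
  · rw [abs_of_nonpos hx0] at *
    rw [abs_of_nonpos (Real.arcsin_nonpos.2 hx0), ← Real.arcsin_neg]
    exact arcsin_le_two_mul (by linarith) hx

/-- Saddle case of the paper's Theorem 2: a saddle of the conservative toy
model (`cos (σ₀ - φ) = -1`, `h''(Lsec) < 0`, `A(Lsec) > 0`) remains, for
`0 < η < c ε` with `ε` small and `D'(Lsec) < 0`, an equilibrium `(σ_d, L_d)`
of the dissipative toy model near `(σ₀, Lsec)` at which the Jacobian `J_D`
satisfies `det J_D < 0`, hence has two nonzero real eigenvalues of opposite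
sign: a saddle. -/
theorem dissipative_saddle_remains_saddle
    (h A D : ℝ → ℝ) (Lsec σ₀ φ : ℝ)
    (hh : ContDiffAt ℝ 2 h Lsec) (hA : ContDiffAt ℝ 2 A Lsec)
    (hD : ContDiffAt ℝ 2 D Lsec)
    (hcrit : deriv h Lsec = 0) (hconc : deriv (deriv h) Lsec < 0)
    (hApos : 0 < A Lsec) (hDdec : deriv D Lsec < 0)
    (hcos : Real.cos (σ₀ - φ) = -1) :
    ∃ ε₀ > (0:ℝ), ∃ c > (0:ℝ), ∃ C > (0:ℝ),
      ∀ ε : ℝ, 0 < ε → ε < ε₀ → ∀ η : ℝ, 0 < η → η < c * ε →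
        ∃ σd Ld : ℝ,
          deriv h Ld + ε * deriv A Ld * Real.cos (σd - φ) = 0 ∧
          ε * A Ld * Real.sin (σd - φ) - η * D Ld = 0 ∧
          |Ld - Lsec| ≤ C * ε ∧ |σd - σ₀| ≤ C * η / ε ∧
          ∀ JD : Matrix (Fin 2) (Fin 2) ℝ,
            JD = !![deriv (fun σ => deriv h Ld + ε * deriv A Ld * Real.cos (σ - φ)) σd,
                    deriv (fun L => deriv h L + ε * deriv A L * Real.cos (σd - φ)) Ld;
                    deriv (fun σ => ε * A Ld * Real.sin (σ - φ) - η * D Ld) σd,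
                    deriv (fun L => ε * A L * Real.sin (σd - φ) - η * D L) Ld] →
            JD.det < 0 ∧
            ∃ x y : ℝ, 0 < x ∧ y < 0 ∧ spectrum ℝ JD = {x, y} := by
  -- Regularity on a common open set
  obtain ⟨U1, hU1o, hU1m, hh1⟩ := hh.contDiffOn' le_rfl (by simp)
  obtain ⟨U2, hU2o, hU2m, hA1⟩ := hA.contDiffOn' le_rfl (by simp)
  obtain ⟨U3, hU3o, hU3m, hD1⟩ := hD.contDiffOn' le_rfl (by simp)
  set U := U1 ∩ U2 ∩ U3 with hUdef
  have hUo : IsOpen U := (hU1o.inter hU2o).inter hU3o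
  have hLU : Lsec ∈ U := ⟨⟨hU1m, hU2m⟩, hU3m⟩
  have hhU : ContDiffOn ℝ 2 h U := (hh1.mono (by simp)).mono (fun x hx => hx.1.1)
  have hAU : ContDiffOn ℝ 2 A U := (hA1.mono (by simp)).mono (fun x hx => hx.1.2)
  have hDU : ContDiffOn ℝ 2 D U := (hD1.mono (by simp)).mono (fun x hx => hx.2)
  have dh1 : ContDiffOn ℝ 1 (deriv h) U := hhU.deriv_of_isOpen hUo (by norm_num)
  have dA1 : ContDiffOn ℝ 1 (deriv A) U := hAU.deriv_of_isOpen hUo (by norm_num)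
  have dD1 : ContDiffOn ℝ 1 (deriv D) U := hDU.deriv_of_isOpen hUo (by norm_num)
  have dhdiff : DifferentiableOn ℝ (deriv h) U := dh1.differentiableOn (by norm_num)
  have dAdiff : DifferentiableOn ℝ (deriv A) U := dA1.differentiableOn (by norm_num)
  have Adiff : DifferentiableOn ℝ A U := hAU.differentiableOn (by norm_num)
  have Ddiff : DifferentiableOn ℝ D U := hDU.differentiableOn (by norm_num)
  have dhcont : ContinuousOn (deriv h) U := dh1.continuousOn
  have dAcont : ContinuousOn (deriv A) U := dA1.continuousOn
  have dDcont : ContinuousOn (deriv D) U := dD1.continuousOn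
  have Acont : ContinuousOn A U := hAU.continuousOn
  have Dcont : ContinuousOn D U := hDU.continuousOn
  have ddhcont : ContinuousOn (deriv (deriv h)) U := dh1.continuousOn_deriv_of_isOpen hUo le_rfl
  have ddAcont : ContinuousOn (deriv (deriv A)) U := dA1.continuousOn_deriv_of_isOpen hUo le_rfl
  -- Constants
  obtain ⟨M, hMdef⟩ : ∃ x : ℝ, x = 1 + |deriv (deriv h) Lsec| + |A Lsec| + |deriv A Lsec| +
      |deriv (deriv A) Lsec| + |D Lsec| + |deriv D Lsec| := ⟨_, rfl⟩
  have hM1 : 1 ≤ M := by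
    have := abs_nonneg (deriv (deriv h) Lsec); have := abs_nonneg (A Lsec)
    have := abs_nonneg (deriv A Lsec); have := abs_nonneg (deriv (deriv A) Lsec)
    have := abs_nonneg (D Lsec); have := abs_nonneg (deriv D Lsec)
    rw [hMdef]; linarith
  have hMpos : 0 < M := by linarith
  obtain ⟨β, hβdef⟩ : ∃ x : ℝ, x = -(deriv (deriv h) Lsec) / 2 := ⟨_, rfl⟩
  have hβ : 0 < β := by rw [hβdef]; linarith
  obtain ⟨Amin, hAmindef⟩ : ∃ x : ℝ, x = A Lsec / 2 := ⟨_, rfl⟩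
  have hAmin : 0 < Amin := by rw [hAmindef]; linarith
  -- Eventual bounds near Lsec
  have hcontAt : ∀ f : ℝ → ℝ, ContinuousOn f U → ContinuousAt f Lsec :=
    fun f hf => hf.continuousAt (hUo.mem_nhds hLU)
  have habs : ∀ f : ℝ → ℝ, ContinuousOn f U → |f Lsec| < M → ∀ᶠ L in nhds Lsec, |f L| < M :=
    fun f hf hlt => ((hcontAt f hf).abs).eventually_lt_const hlt
  have ev1 : ∀ᶠ L in nhds Lsec, deriv (deriv h) L < -β :=
    (hcontAt _ ddhcont).eventually_lt_const (by rw [hβdef]; linarith)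
  have ev2 : ∀ᶠ L in nhds Lsec, Amin < A L :=
    (hcontAt _ Acont).eventually_const_lt (by rw [hAmindef]; linarith)
  have ev3 : ∀ᶠ L in nhds Lsec, |deriv A L| < M :=
    habs _ dAcont (by rw [hMdef]; nlinarith [abs_nonneg (deriv A Lsec), abs_nonneg (deriv (deriv h) Lsec), abs_nonneg (A Lsec), abs_nonneg (deriv (deriv A) Lsec), abs_nonneg (D Lsec), abs_nonneg (deriv D Lsec)])
  have ev4 : ∀ᶠ L in nhds Lsec, |deriv (deriv A) L| < M :=
    habs _ ddAcont (by rw [hMdef]; nlinarith [abs_nonneg (deriv (deriv h) Lsec), abs_nonneg (A Lsec), abs_nonneg (deriv A Lsec), abs_nonneg (D Lsec), abs_nonneg (deriv D Lsec)])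
  have ev5 : ∀ᶠ L in nhds Lsec, |D L| < M :=
    habs _ Dcont (by rw [hMdef]; nlinarith [abs_nonneg (deriv (deriv h) Lsec), abs_nonneg (A Lsec), abs_nonneg (deriv A Lsec), abs_nonneg (deriv (deriv A) Lsec), abs_nonneg (deriv D Lsec)])
  have ev6 : ∀ᶠ L in nhds Lsec, |deriv D L| < M :=
    habs _ dDcont (by rw [hMdef]; nlinarith [abs_nonneg (deriv (deriv h) Lsec), abs_nonneg (A Lsec), abs_nonneg (deriv A Lsec), abs_nonneg (deriv (deriv A) Lsec), abs_nonneg (D Lsec)])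
  have ev7 : ∀ᶠ L in nhds Lsec, |A L| < M :=
    habs _ Acont (by rw [hMdef]; nlinarith [abs_nonneg (deriv (deriv h) Lsec), abs_nonneg (deriv A Lsec), abs_nonneg (deriv (deriv A) Lsec), abs_nonneg (D Lsec), abs_nonneg (deriv D Lsec)])
  have ev8 : ∀ᶠ L in nhds Lsec, L ∈ U := hUo.mem_nhds hLU
  obtain ⟨r, hr, hball⟩ := Metric.eventually_nhds_iff.1
    (ev8.and (ev1.and (ev2.and (ev3.and (ev4.and (ev5.and (ev6.and ev7)))))))
  have hP : ∀ L : ℝ, |L - Lsec| < r → L ∈ U ∧ deriv (deriv h) L < -β ∧ Amin < A L ∧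
      |deriv A L| < M ∧ |deriv (deriv A) L| < M ∧ |D L| < M ∧ |deriv D L| < M ∧ |A L| < M :=
    fun L hL => hball (show dist L Lsec < r by rwa [Real.dist_eq])
  -- the announced constants
  obtain ⟨K, hKdef⟩ : ∃ x : ℝ, x = (M + 1) / β := ⟨_, rfl⟩
  have hK : 0 < K := hKdef ▸ div_pos (by linarith) hβ
  have hβK : β * K = M + 1 := by rw [hKdef, mul_div_cancel₀ _ hβ.ne']
  obtain ⟨c, hcdef⟩ : ∃ x : ℝ, x = min 1 (Amin / (2 * M)) := ⟨_, rfl⟩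
  have hc : 0 < c := hcdef ▸ lt_min one_pos (div_pos hAmin (by linarith))
  have hc1 : c ≤ 1 := hcdef ▸ min_le_left _ _
  have hc2 : c ≤ Amin / (2 * M) := hcdef ▸ min_le_right _ _
  have h4M : (0:ℝ) ≤ 4 * M / Amin := div_nonneg (by linarith) hAmin.le
  obtain ⟨C, hCdef⟩ : ∃ x : ℝ, x = K + 4 * M / Amin + 1 := ⟨_, rfl⟩
  have hC : 0 < C := by rw [hCdef]; linarith
  obtain ⟨ε₀, hε₀def⟩ : ∃ x : ℝ, x = min (r / (K + 1)) (β * Amin / (8 * M ^ 2)) := ⟨_, rfl⟩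
  have hε₀ : 0 < ε₀ := hε₀def ▸ lt_min (div_pos hr (by linarith)) (div_pos (mul_pos hβ hAmin) (by positivity))
  refine ⟨ε₀, hε₀, c, hc, C, hC, ?_⟩
  intro ε hε hεε₀ η hη hηc
  have hηε : η < ε := by
    have := mul_le_mul_of_nonneg_right hc1 hε.le
    linarith
  have hKε : K * ε < r := by
    have h1 : ε < r / (K + 1) := lt_of_lt_of_le hεε₀ (hε₀def ▸ min_le_left _ _)
    rw [lt_div_iff₀ (by linarith : (0:ℝ) < K + 1)] at h1
    linarith
  have hε8 : 8 * M ^ 2 * ε < β * Amin := by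
    have h1 : ε < β * Amin / (8 * M ^ 2) := lt_of_lt_of_le hεε₀ (hε₀def ▸ min_le_right _ _)
    rw [lt_div_iff₀ (by positivity : (0:ℝ) < 8 * M ^ 2)] at h1
    linarith
  set I := Icc (Lsec - K * ε) (Lsec + K * ε) with hIdef
  have hQ : ∀ L ∈ I, L ∈ U ∧ deriv (deriv h) L < -β ∧ Amin < A L ∧
      |deriv A L| < M ∧ |deriv (deriv A) L| < M ∧ |D L| < M ∧ |deriv D L| < M ∧ |A L| < M := by
    intro L hL
    exact hP L (lt_of_le_of_lt (abs_le.2 ⟨by linarith [hL.1], by linarith [hL.2]⟩) hKε)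
  have hIU : I ⊆ U := fun L hL => (hQ L hL).1
  have hKεpos : 0 < K * ε := mul_pos hK hε
  have hLsecI : Lsec ∈ I := ⟨by linarith, by linarith⟩
  have hLpI : Lsec + K * ε ∈ I := ⟨by linarith, le_rfl⟩
  have hLmI : Lsec - K * ε ∈ I := ⟨le_rfl, by linarith⟩
  -- monotonicity estimate on deriv h
  have hanti : AntitoneOn (fun L => deriv h L + β * L) I := by
    apply antitoneOn_of_deriv_nonpos (convex_Icc _ _)
    · exact (dhcont.mono hIU).add (continuous_const.mul continuous_id).continuousOn
    · exact (dhdiff.mono (interior_subset.trans hIU)).add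
        ((differentiable_id.const_mul β).differentiableOn)
    · intro x hx
      have hxI : x ∈ I := interior_subset hx
      have hxU : x ∈ U := hIU hxI
      have h1 : HasDerivAt (fun L => deriv h L + β * L)
          (deriv (deriv h) x + β * 1) x :=
        ((dhdiff x hxU).differentiableAt (hUo.mem_nhds hxU)).hasDerivAt.add
          (HasDerivAt.const_mul β (hasDerivAt_id x))
      rw [h1.deriv]
      have := (hQ x hxI).2.1
      linarith
  have hplus : deriv h (Lsec + K * ε) ≤ -(β * (K * ε)) := by
    have h1 := hanti hLsecI hLpI (by linarith)
    simp only at h1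
    linarith [h1, hcrit]
  have hminus : β * (K * ε) ≤ deriv h (Lsec - K * ε) := by
    have h1 := hanti hLmI hLsecI (by linarith)
    simp only at h1
    linarith [h1, hcrit]
  -- bound on s L = η D L / (ε A L)
  have hsle : ∀ L ∈ I, |η * D L / (ε * A L)| ≤ 1 / 2 := by
    intro L hL
    obtain ⟨-, -, hAm, -, -, hDM, -, -⟩ := hQ L hL
    exact toy_s_bound ε η c M Amin (A L) (D L) hε hη hηc hc2 hMpos hAmin hAm hDM
  -- IVT for the reduced equation
  have hsqcont : ContinuousOn (fun L => η * D L / (ε * A L)) I := by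
    apply ContinuousOn.div (continuousOn_const.mul (Dcont.mono hIU))
      (continuousOn_const.mul (Acont.mono hIU))
    intro L hL
    exact (mul_pos hε (lt_trans hAmin (hQ L hL).2.2.1)).ne'
  have hgcont : ContinuousOn
      (fun L => deriv h L - ε * deriv A L * Real.sqrt (1 - (η * D L / (ε * A L)) ^ 2)) I :=
    (dhcont.mono hIU).sub ((continuousOn_const.mul (dAcont.mono hIU)).mul
      (Real.continuous_sqrt.comp_continuousOn (continuousOn_const.sub (hsqcont.pow 2))))
  have hgplus : (fun L => deriv h L - ε * deriv A L * Real.sqrt (1 - (η * D L / (ε * A L)) ^ 2))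
      (Lsec + K * ε) < 0 := by
    simp only
    set L := Lsec + K * ε
    obtain ⟨-, -, -, hA'M, -, -, -, -⟩ := hQ L hLpI
    have hq0 : 0 ≤ Real.sqrt (1 - (η * D L / (ε * A L)) ^ 2) := Real.sqrt_nonneg _
    have hq1 : Real.sqrt (1 - (η * D L / (ε * A L)) ^ 2) ≤ 1 :=
      Real.sqrt_le_one.2 (by linarith [sq_nonneg (η * D L / (ε * A L))])
    have habs' : |ε * deriv A L * Real.sqrt (1 - (η * D L / (ε * A L)) ^ 2)| ≤ ε * M := by
      rw [abs_mul, abs_mul, abs_of_pos hε, abs_of_nonneg hq0]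
      linarith [mul_le_mul_of_nonneg_left hq1 (mul_nonneg hε.le (abs_nonneg (deriv A L))),
        mul_lt_mul_of_pos_left hA'M hε]
    have h2 := abs_le.1 habs'
    have hβKε : β * (K * ε) = (M + 1) * ε := by
      rw [show β * (K * ε) = β * K * ε from by ring, hβK]
    linarith [hplus, h2.1, hβKε]
  have hgminus : 0 < (fun L => deriv h L - ε * deriv A L *
      Real.sqrt (1 - (η * D L / (ε * A L)) ^ 2)) (Lsec - K * ε) := by
    simp only
    set L := Lsec - K * ε
    obtain ⟨-, -, -, hA'M, -, -, -, -⟩ := hQ L hLmI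
    have hq0 : 0 ≤ Real.sqrt (1 - (η * D L / (ε * A L)) ^ 2) := Real.sqrt_nonneg _
    have hq1 : Real.sqrt (1 - (η * D L / (ε * A L)) ^ 2) ≤ 1 :=
      Real.sqrt_le_one.2 (by linarith [sq_nonneg (η * D L / (ε * A L))])
    have habs' : |ε * deriv A L * Real.sqrt (1 - (η * D L / (ε * A L)) ^ 2)| ≤ ε * M := by
      rw [abs_mul, abs_mul, abs_of_pos hε, abs_of_nonneg hq0]
      linarith [mul_le_mul_of_nonneg_left hq1 (mul_nonneg hε.le (abs_nonneg (deriv A L))),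
        mul_lt_mul_of_pos_left hA'M hε]
    have h2 := abs_le.1 habs'
    have hβKε : β * (K * ε) = (M + 1) * ε := by
      rw [show β * (K * ε) = β * K * ε from by ring, hβK]
    linarith [hminus, h2.2, hβKε]
  have hIVT := intermediate_value_Icc' (by linarith : Lsec - K * ε ≤ Lsec + K * ε) hgcont
  have h0mem : (0:ℝ) ∈ Icc
      ((fun L => deriv h L - ε * deriv A L * Real.sqrt (1 - (η * D L / (ε * A L)) ^ 2))
        (Lsec + K * ε))
      ((fun L => deriv h L - ε * deriv A L * Real.sqrt (1 - (η * D L / (ε * A L)) ^ 2))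
        (Lsec - K * ε)) := ⟨hgplus.le, hgminus.le⟩
  obtain ⟨Ld, hLdI, hgLd0⟩ := hIVT h0mem
  have hgLd : deriv h Ld - ε * deriv A Ld * Real.sqrt (1 - (η * D Ld / (ε * A Ld)) ^ 2) = 0 :=
    hgLd0
  -- data at Ld
  obtain ⟨hLdU, hh2, hAm, hA'M, hA''M, hDM, hD'M, hAM⟩ := hQ Ld hLdI
  have hALd : 0 < A Ld := lt_trans hAmin hAm
  have hεALd : (0:ℝ) < ε * A Ld := mul_pos hε hALd
  set sd := η * D Ld / (ε * A Ld) with hsddef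
  have hsdhalf : |sd| ≤ 1 / 2 := hsle Ld hLdI
  have hsd1 : -1 ≤ sd := by cases abs_le.1 hsdhalf; linarith
  have hsd1' : sd ≤ 1 := by cases abs_le.1 hsdhalf; linarith
  have hsdsq : sd ^ 2 ≤ 1 / 4 := by
    have h1 := sq_le_sq' (abs_le.1 hsdhalf).1 (abs_le.1 hsdhalf).2
    norm_num at h1; linarith
  set q := Real.sqrt (1 - sd ^ 2) with hqdef
  have hq0 : 0 ≤ q := Real.sqrt_nonneg _
  have hq1 : q ≤ 1 := Real.sqrt_le_one.2 (by linarith [sq_nonneg sd])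
  have hqhalf : 1 / 2 ≤ q := by
    have h14 : Real.sqrt (1 / 4) = 1 / 2 := by
      rw [show (1/4:ℝ) = (1/2)^2 by norm_num, Real.sqrt_sq (by norm_num)]
    calc (1/2:ℝ) = Real.sqrt (1/4) := h14.symm
      _ ≤ q := Real.sqrt_le_sqrt (by linarith)
  -- the angle
  have hcpi : Real.cos ((σ₀ - φ) - π) = 1 := by rw [Real.cos_sub_pi, hcos]; norm_num
  obtain ⟨n, hn⟩ := (Real.cos_eq_one_iff _).1 hcpi
  set σd := σ₀ - Real.arcsin sd with hσddef
  have hθ : σd - φ = (π - Real.arcsin sd) + n * (2 * π) := by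
    simp only [hσddef]; linarith [hn]
  have hsinθ : Real.sin (σd - φ) = sd := by
    rw [hθ, Real.sin_add_int_mul_two_pi, Real.sin_pi_sub, Real.sin_arcsin hsd1 hsd1']
  have hcosθ : Real.cos (σd - φ) = -q := by
    rw [hθ, Real.cos_add_int_mul_two_pi, Real.cos_pi_sub, Real.cos_arcsin]
  refine ⟨σd, Ld, ?_, ?_, ?_, ?_, ?_⟩
  · rw [hcosθ]; linear_combination hgLd
  · rw [hsinθ, hsddef, mul_div_assoc']
    field_simp
    ring
  · have h1 : |Ld - Lsec| ≤ K * ε := abs_le.2 ⟨by linarith [hLdI.1], by linarith [hLdI.2]⟩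
    have h2 : K * ε ≤ C * ε := by
      apply mul_le_mul_of_nonneg_right _ hε.le
      rw [hCdef]; linarith
    linarith
  · have h1 : |σd - σ₀| = |Real.arcsin sd| := by
      rw [hσddef]; rw [show σ₀ - Real.arcsin sd - σ₀ = -(Real.arcsin sd) by ring, abs_neg]
    have h2 : |Real.arcsin sd| ≤ 2 * |sd| := abs_arcsin_le_two_mul hsdhalf
    have h3 : |sd| ≤ η * M / (ε * Amin) := by
      rw [hsddef, abs_div, abs_of_pos hεALd, abs_mul, abs_of_pos hη]
      exact div_le_div₀ (by positivity) (mul_le_mul_of_nonneg_left hDM.le hη.le)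
        (mul_pos hε hAmin) (mul_le_mul_of_nonneg_left hAm.le hε.le)
    have h4 : 2 * (η * M / (ε * Amin)) ≤ C * η / ε := by
      rw [hCdef]
      exact toy_sigma_bound K M Amin η ε hK hMpos hAmin hη hε
    rw [h1]; linarith
  · intro JD hJD
    -- Jacobian entries
    have hd1 : HasDerivAt (fun σ : ℝ => σ - φ) 1 σd := (hasDerivAt_id σd).sub_const φ
    have e11 : deriv (fun σ => deriv h Ld + ε * deriv A Ld * Real.cos (σ - φ)) σd
        = ε * deriv A Ld * -sd := by
      have h2 : HasDerivAt (fun σ => Real.cos (σ - φ)) (-Real.sin (σd - φ)) σd := by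
        simpa using hd1.cos
      have h3 := (HasDerivAt.const_mul (ε * deriv A Ld) h2).const_add (deriv h Ld)
      rw [h3.deriv, hsinθ]
    have e21 : deriv (fun σ => ε * A Ld * Real.sin (σ - φ) - η * D Ld) σd
        = ε * A Ld * -q := by
      have h2 : HasDerivAt (fun σ => Real.sin (σ - φ)) (Real.cos (σd - φ)) σd := by
        simpa using hd1.sin
      have h3 := (HasDerivAt.const_mul (ε * A Ld) h2).sub_const (η * D Ld)
      rw [h3.deriv, hcosθ]
    have hdh2 : HasDerivAt (deriv h) (deriv (deriv h) Ld) Ld :=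
      ((dhdiff Ld hLdU).differentiableAt (hUo.mem_nhds hLdU)).hasDerivAt
    have hdA2 : HasDerivAt (deriv A) (deriv (deriv A) Ld) Ld :=
      ((dAdiff Ld hLdU).differentiableAt (hUo.mem_nhds hLdU)).hasDerivAt
    have hA2 : HasDerivAt A (deriv A Ld) Ld :=
      ((Adiff Ld hLdU).differentiableAt (hUo.mem_nhds hLdU)).hasDerivAt
    have hD2 : HasDerivAt D (deriv D Ld) Ld :=
      ((Ddiff Ld hLdU).differentiableAt (hUo.mem_nhds hLdU)).hasDerivAt
    have e12 : deriv (fun L => deriv h L + ε * deriv A L * Real.cos (σd - φ)) Ld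
        = deriv (deriv h) Ld + ε * deriv (deriv A) Ld * -q := by
      have h3 := hdh2.add ((HasDerivAt.const_mul ε hdA2).mul_const (Real.cos (σd - φ)))
      rw [HasDerivAt.deriv (f := fun L => deriv h L + ε * deriv A L * Real.cos (σd - φ)) h3, hcosθ]
    have e22 : deriv (fun L => ε * A L * Real.sin (σd - φ) - η * D L) Ld
        = ε * deriv A Ld * sd - η * deriv D Ld := by
      have h3 := ((HasDerivAt.const_mul ε hA2).mul_const (Real.sin (σd - φ))).sub
        (HasDerivAt.const_mul η hD2)
      rw [HasDerivAt.deriv (f := fun L => ε * A L * Real.sin (σd - φ) - η * D L) h3, hsinθ]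
    have hdet : JD.det = (ε * deriv A Ld * -sd) * (ε * deriv A Ld * sd - η * deriv D Ld)
        - (deriv (deriv h) Ld + ε * deriv (deriv A) Ld * -q) * (ε * A Ld * -q) := by
      rw [hJD, Matrix.det_fin_two_of, e11, e12, e21, e22]
    have hdetneg : JD.det < 0 := by
      rw [hdet]
      exact toy_det_neg ε η β Amin M (deriv A Ld) (deriv (deriv A) Ld) (deriv D Ld)
        (deriv (deriv h) Ld) (A Ld) sd q hε hη hηε hβ hAmin hM1 hh2 hAm hAM hA'M hA''M hD'M
        hsdhalf hq1 hqhalf hε8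
    exact ⟨hdetneg, spectrum_saddle JD hdetneg⟩
end
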